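/- arXiv:1302.0587 — 10 statements merged into one kernel-verified Lean document; each statement's English description precedes it below -/
import Mathlib

section
/- Let p and q be relatively prime odd integers with p ≥ 3 and 0 < q < p. Then d(4p³ − p, (4p² − 1)q + 2p) = d(p, q) + 2 and d(4p³ − p, (4p² − 1)q − 2p) = d(p, q) − 2. -/
set_option maxHeartbeats 1000000

/-- For integers `p > q > 0`, the diagonal element `d(p, q)` of the linking matrix of the
dihedral covering link of the 2-bridge knot `b(p,q)`:
`d(p, q) = −∑_{k=1}^{p−1} (−1)^{⌊q·k/p⌋}`. -/
noncomputable def diagElem (p q : ℤ) : ℤ :=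
  -∑ k ∈ Finset.Icc (1 : ℤ) (p - 1), ((⌊(q : ℚ) * (k : ℚ) / (p : ℚ)⌋).negOnePow : ℤ)

lemma ediv_eq_iff' {b a n : ℤ} (hb : 0 < b) : a / b = n ↔ n * b ≤ a ∧ a < (n + 1) * b := by
  rw [← Int.le_ediv_iff_mul_le hb, ← Int.ediv_lt_iff_lt_mul hb]
  omega

-- small div
lemma ediv_small {b d : ℤ} (h0 : 0 ≤ d) (h1 : d < b) : d / b = 0 := by
  rw [ediv_eq_iff' (by omega)]; omega

-- L1
lemma ediv_sub_ediv {m c y : ℤ} (hm : 0 < m) (h0 : 0 ≤ c) (h1 : c < m) :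
    y / m - (y - c) / m = if y % m < c then 1 else 0 := by
  have h2 : y = m * (y / m) + y % m := (Int.mul_ediv_add_emod y m).symm
  have h3 : 0 ≤ y % m := Int.emod_nonneg y (by omega)
  have h4 : y % m < m := Int.emod_lt_of_pos y hm
  rcases lt_or_ge (y % m) c with h | h
  · have : (y - c) / m = y / m - 1 := by
      rw [ediv_eq_iff' hm]; constructor <;> nlinarith
    rw [this]; simp [h]
  · have : (y - c) / m = y / m := by
      rw [ediv_eq_iff' hm]; constructor <;> nlinarith
    rw [this]; simp; omega

-- B4
lemma neg_ediv {b x : ℤ} (hb : 0 < b) (h : ¬ b ∣ x) : (-x) / b = -(x / b) - 1 := by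
  have h2 : x = b * (x / b) + x % b := (Int.mul_ediv_add_emod x b).symm
  have h3 : 0 ≤ x % b := Int.emod_nonneg x (by omega)
  have h4 : x % b < b := Int.emod_lt_of_pos x hb
  have h5 : x % b ≠ 0 := fun hc => h (Int.dvd_of_emod_eq_zero hc)
  rw [ediv_eq_iff' hb]
  constructor
  · nlinarith
  · have e : (-(x / b) - 1 + 1) * b = -(b * (x / b)) := by ring
    rw [e]; omega

-- B5 bridge
lemma emod_two_ediv {b x : ℤ} (hb : 0 < b) : (x % (2 * b)) / b = (x / b) % 2 := by
  set t := x / (2 * b) with ht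
  set s := x % (2 * b) with hs
  have h2 : x = 2 * b * t + s := (Int.mul_ediv_add_emod x (2 * b)).symm
  have h3 : 0 ≤ s := Int.emod_nonneg x (by omega)
  have h4 : s < 2 * b := Int.emod_lt_of_pos x (by omega)
  have hx2 : x = s + b * (2 * t) := by rw [h2]; ring
  have hx : x / b = s / b + 2 * t := by
    conv_lhs => rw [hx2]
    exact Int.add_mul_ediv_left _ _ (by omega : b ≠ 0)
  rcases lt_or_ge s b with h | h
  · rw [hx, ediv_small h3 h]; omega
  · have : s / b = 1 := by rw [ediv_eq_iff' hb]; omega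
    rw [hx, this]; omega

lemma negOnePow_coe (n : ℤ) : (n.negOnePow : ℤ) = 1 - 2 * (n % 2) := by
  rcases Int.even_or_odd n with h | h
  · rw [Int.negOnePow_even n h]
    rw [Int.even_iff] at h
    rw [h]; norm_num
  · rw [Int.negOnePow_odd n h]
    rw [Int.odd_iff] at h
    rw [h]; norm_num

lemma floor_div_int (a p : ℤ) (hp : 0 < p) : ⌊(a : ℚ) / (p : ℚ)⌋ = a / p := by
  have h : ((p.toNat : ℕ) : ℤ) = p := Int.toNat_of_nonneg (by omega)
  have h2 : ((p.toNat : ℕ) : ℚ) = (p : ℚ) := by exact_mod_cast congrArg (Int.cast : ℤ → ℚ) h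
  rw [← h2, Rat.floor_intCast_div_natCast, h]

lemma diagElem_eq (p q : ℤ) (hp : 0 < p) :
    diagElem p q = -(p - 1) + 2 * ∑ k ∈ Finset.Ico (0 : ℤ) p, ((q * k / p) % 2) := by
  unfold diagElem
  have hIcc : Finset.Icc (1 : ℤ) (p - 1) = Finset.Ico (1 : ℤ) p := by
    ext x; simp [Finset.mem_Icc, Finset.mem_Ico]
  have hins : Finset.Ico (0 : ℤ) p = insert 0 (Finset.Ico (1 : ℤ) p) := by
    ext x; simp [Finset.mem_Ico]; omega
  have hpt : ∀ k ∈ Finset.Ico (1 : ℤ) p,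
      ((⌊(q : ℚ) * (k : ℚ) / (p : ℚ)⌋).negOnePow : ℤ) = 1 - 2 * ((q * k / p) % 2) := by
    intro k _
    rw [show (q : ℚ) * (k : ℚ) = ((q * k : ℤ) : ℚ) by push_cast; ring,
      floor_div_int _ _ hp, negOnePow_coe]
  rw [hIcc, Finset.sum_congr rfl hpt, Finset.sum_sub_distrib, Finset.sum_const,
    ← Finset.mul_sum]
  have hcard : (Finset.Ico (1 : ℤ) p).card = (p - 1).toNat := Int.card_Ico 1 p
  have hsum0 : ∑ k ∈ Finset.Ico (0 : ℤ) p, ((q * k / p) % 2)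
      = ∑ k ∈ Finset.Ico (1 : ℤ) p, ((q * k / p) % 2) := by
    rw [hins, Finset.sum_insert (by simp)]
    norm_num
  rw [hsum0, hcard]
  have : ((p - 1).toNat : ℤ) = p - 1 := Int.toNat_of_nonneg (by omega)
  rw [nsmul_eq_mul, this]
  ring

lemma heart (p W T E : ℤ) (hp : 0 < p) (hW0 : 0 ≤ W)
    (hWub : W ≤ p * (4 * p ^ 2 - 1) + 1 - 2 * p)
    (hT : T = 2 * p ^ 2 ∨ (T = 2 * p ^ 2 - 1 ∧ 2 * p ^ 2 ≤ W))
    (hE : ∑ i ∈ Finset.Ico (0 : ℤ) p,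
        (if (-W - 1 - (2 * i + 1) * p) % (4 * p ^ 2) < p then (1 : ℤ) else 0) = E) :
    ∑ t ∈ Finset.Ico (0 : ℤ) T, ((W + 4 * p ^ 2 * t) / (p * (4 * p ^ 2 - 1))) % 2
      = p * p - E := by
  set M : ℤ := 4 * p ^ 2 - 1 with hM
  set m : ℤ := 4 * p ^ 2 with hm
  set P : ℤ := p * M with hP
  have hm0 : 0 < m := by positivity
  have hM0 : 0 < M := by nlinarith
  have hP0 : 0 < P := by positivity
  have hT0 : 0 < T := by rcases hT with h | ⟨h, _⟩ <;> nlinarith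
  set c : ℤ → ℤ := fun t => (W + m * t) / P with hc
  -- bounds on c
  have hcb : ∀ t, 0 ≤ t → t < T → 0 ≤ c t ∧ c t ≤ 2 * p := by
    intro t ht0 htT
    constructor
    · exact Int.ediv_nonneg (by nlinarith) (by omega)
    · have hnum : W + m * t < (2 * p + 1) * P := by
        have htT' : t ≤ T - 1 := by omega
        have : m * t ≤ m * (T - 1) := by
          apply mul_le_mul_of_nonneg_left htT' (by omega)
        rcases hT with h | ⟨h, hW⟩ <;> nlinarith
      have := (ediv_eq_iff' hP0 (a := W + m * t) (n := c t)).mp rfl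
      nlinarith
  set lo : ℤ → ℤ := fun j => (j * P - W + M) / m with hlo
  -- characterization of c t = n
  have hchar : ∀ n t, 0 ≤ t → t < T → (c t = n ↔ lo n ≤ t ∧ t < lo (n + 1)) := by
    intro n t ht0 htT
    have key : ∀ j : ℤ, lo j ≤ t ↔ j * P ≤ W + m * t := by
      intro j
      have hlod : lo j = (j * P - W + M) / m := rfl
      constructor
      · intro h
        have h2 : (j * P - W + M) / m < t + 1 := by omega
        rw [Int.ediv_lt_iff_lt_mul hm0] at h2
        nlinarith
      · intro h
        have h2 : j * P - W + M < (t + 1) * m := by nlinarith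
        have := (Int.ediv_lt_iff_lt_mul hm0 (a := j * P - W + M) (b := t + 1)).mpr h2
        omega
    rw [ediv_eq_iff' hP0, key n]
    have := key (n + 1)
    constructor
    · rintro ⟨h1, h2⟩
      exact ⟨h1, by omega⟩
    · rintro ⟨h1, h2⟩
      refine ⟨h1, ?_⟩
      have : ¬ ((n+1) * P ≤ W + m * t) := by rw [← this]; omega
      omega
  -- bounds on lo
  have hlo0 : ∀ n : ℤ, 1 ≤ n → 0 ≤ lo n := by
    intro n hn
    apply Int.ediv_nonneg _ (by omega)
    nlinarith
  have hloT : ∀ n : ℤ, n ≤ 2 * p → lo n ≤ T := by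
    intro n hn
    have mono : lo n ≤ lo (2 * p) := by
      apply Int.ediv_le_ediv hm0
      nlinarith
    refine mono.trans ?_
    have h2 : lo (2 * p) < T + 1 := by
      rw [hlo, Int.ediv_lt_iff_lt_mul hm0]
      rcases hT with h | ⟨h, hW⟩ <;> nlinarith
    omega
  -- count of t with c t = n, as an integer
  set Cnt : ℤ → ℤ := fun n => ∑ t ∈ Finset.Ico (0 : ℤ) T, (if c t = n then (1 : ℤ) else 0)
    with hCnt
  -- telescoping/difference formula
  have htel : ∀ n : ℤ, lo (n + 1) - lo n
      = p - (if (-W - 1 - n * p) % m < p then 1 else 0) := by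
    intro n
    set Y : ℤ := n * P - W + M with hY
    have h1 : lo n = Y / m := rfl
    have h2 : lo (n + 1) = (Y - p) / m + p := by
      have e1 : (n + 1) * P - W + M = (Y - p) + m * p := by
        simp only [hY, hP, hM, hm]; ring
      show ((n + 1) * P - W + M) / m = (Y - p) / m + p
      rw [e1, Int.add_mul_ediv_left _ _ (by omega : m ≠ 0)]
    have h3 : Y / m - (Y - p) / m = if Y % m < p then 1 else 0 :=
      ediv_sub_ediv hm0 (by omega) (by nlinarith)
    have h4 : Y % m = (-W - 1 - n * p) % m :=
      Int.modEq_iff_dvd.mpr ⟨-(n * p + 1), by simp only [hY, hP, hM, hm]; ring⟩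
    rw [h1, h2, ← h4]
    omega
  -- count formula for odd n in range
  have hcount : ∀ n : ℤ, 1 ≤ n → n ≤ 2 * p - 1 → Cnt n = lo (n + 1) - lo n := by
    intro n hn1 hn2
    have hfil : (Finset.Ico (0 : ℤ) T).filter (fun t => c t = n)
        = Finset.Ico (lo n) (lo (n + 1)) := by
      ext t
      simp only [Finset.mem_filter, Finset.mem_Ico]
      constructor
      · rintro ⟨⟨ht0, htT⟩, hct⟩
        exact (hchar n t ht0 htT).mp hct
      · rintro ⟨h1, h2⟩
        have ht0 : 0 ≤ t := le_trans (hlo0 n hn1) h1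
        have htT : t < T := lt_of_lt_of_le h2 (hloT (n + 1) (by omega))
        exact ⟨⟨ht0, htT⟩, (hchar n t ht0 htT).mpr ⟨h1, h2⟩⟩
    have hle : lo n ≤ lo (n + 1) := by
      have := htel n
      have : lo (n + 1) - lo n ≥ p - 1 := by omega
      omega
    show (∑ t ∈ Finset.Ico (0 : ℤ) T, if c t = n then (1:ℤ) else 0) = lo (n + 1) - lo n
    rw [← Finset.sum_filter, hfil, Finset.sum_const, Int.card_Ico, nsmul_eq_mul,
      Int.toNat_of_nonneg (by omega : (0:ℤ) ≤ lo (n+1) - lo n)]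
    ring
  -- expand each term as a sum over possible values n
  have step1 : ∀ t ∈ Finset.Ico (0 : ℤ) T,
      (W + m * t) / P % 2
        = ∑ n ∈ Finset.Ico (0 : ℤ) (2 * p + 1), (if c t = n then n % 2 else 0) := by
    intro t ht
    simp only [Finset.mem_Ico] at ht
    have hmem : c t ∈ Finset.Ico (0 : ℤ) (2 * p + 1) := by
      have := hcb t ht.1 ht.2
      simp only [Finset.mem_Ico]; omega
    rw [Finset.sum_ite_eq, if_pos hmem]
  rw [Finset.sum_congr rfl step1, Finset.sum_comm]
  -- inner sums are (n % 2) * Cnt n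
  have step2 : ∀ n : ℤ, (∑ t ∈ Finset.Ico (0 : ℤ) T, if c t = n then n % 2 else 0)
      = n % 2 * Cnt n := by
    intro n
    rw [hCnt]
    simp only [Finset.mul_sum]
    apply Finset.sum_congr rfl
    intro t _
    rcases eq_or_ne (c t) n with h | h
    · simp [h]
    · simp [h]
  rw [Finset.sum_congr rfl (fun n _ => step2 n)]
  -- restrict to odd n and reindex
  have step3 : ∀ n ∈ Finset.Ico (0 : ℤ) (2 * p + 1),
      n % 2 * Cnt n = if n % 2 = 1 then Cnt n else 0 := by
    intro n _
    rcases Int.emod_two_eq n with h | h <;> simp [h]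
  rw [Finset.sum_congr rfl step3, ← Finset.sum_filter]
  have step4 : ∑ n ∈ (Finset.Ico (0 : ℤ) (2 * p + 1)).filter (fun n => n % 2 = 1), Cnt n
      = ∑ i ∈ Finset.Ico (0 : ℤ) p, Cnt (2 * i + 1) := by
    apply Finset.sum_nbij' (i := fun n => (n - 1) / 2) (j := fun i => 2 * i + 1)
    · intro a ha
      simp only [Finset.mem_filter, Finset.mem_Ico] at ha ⊢
      omega
    · intro a ha
      simp only [Finset.mem_filter, Finset.mem_Ico] at ha ⊢
      omega
    · intro a ha
      simp only [Finset.mem_filter, Finset.mem_Ico] at ha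
      omega
    · intro a ha
      simp only [Finset.mem_Ico] at ha
      omega
    · intro a ha
      simp only [Finset.mem_filter, Finset.mem_Ico] at ha
      congr 1
      omega
  rw [step4]
  -- evaluate each count
  have step5 : ∀ i ∈ Finset.Ico (0 : ℤ) p,
      Cnt (2 * i + 1) = p - (if (-W - 1 - (2 * i + 1) * p) % m < p then 1 else 0) := by
    intro i hi
    simp only [Finset.mem_Ico] at hi
    rw [hcount (2 * i + 1) (by omega) (by omega)]
    have := htel (2 * i + 1)
    omega
  rw [Finset.sum_congr rfl step5, Finset.sum_sub_distrib, hE, Finset.sum_const,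
    Int.card_Ico, nsmul_eq_mul, Int.toNat_of_nonneg (by omega : (0:ℤ) ≤ p - 0)]
  ring

-- the exceptional-count computation
lemma Ecalc (p q u : ℤ) (hp : 0 < p) (hq : Odd q) (hcop : IsCoprime p q)
    (hu0 : 0 ≤ u) (hu2 : u < 2 * p) :
    ∑ i ∈ Finset.Ico (0 : ℤ) p,
      (if (-((4*p^2-1) * ((q*u) % p) + 2*p*u) - 1 - (2 * i + 1) * p) % (4 * p ^ 2) < p
        then (1 : ℤ) else 0)
      = if u = p then 1 else 0 := by
  set r : ℤ := (q * u) % p with hr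
  have hr0 : 0 ≤ r := Int.emod_nonneg _ (by omega)
  have hrp : r < p := Int.emod_lt_of_pos _ hp
  have hm0 : (0:ℤ) < 4 * p ^ 2 := by positivity
  have key : ∀ i : ℤ, 0 ≤ i → i < p →
      ((-((4*p^2-1) * r + 2*p*u) - 1 - (2 * i + 1) * p) % (4 * p ^ 2) < p
        ↔ (u = p ∧ i = p - 1)) := by
    intro i hi0 hip
    set z : ℤ := -((4*p^2-1) * r + 2*p*u) - 1 - (2 * i + 1) * p with hz
    set J : ℤ := r - 1 - p * (2*u + 2*i + 1) with hJ
    have hzJ : z % (4 * p ^ 2) = J % (4 * p ^ 2) := by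
      apply Int.ModEq.eq
      exact Int.modEq_iff_dvd.mpr ⟨r, by rw [hz, hJ]; ring⟩
    rw [hzJ]
    set w : ℤ := J % (4 * p ^ 2) with hw
    have hw0 : 0 ≤ w := Int.emod_nonneg _ (by omega)
    have hw4 : w < 4 * p ^ 2 := Int.emod_lt_of_pos _ hm0
    obtain ⟨c, hc⟩ : (4 * p ^ 2 : ℤ) ∣ (J - w) := Int.dvd_self_sub_of_emod_eq rfl
    constructor
    · intro hwp
      have hwmod : w % p = (r - 1) % p := by
        have h1 : w % p = J % p := by
          rw [hw, Int.emod_emod_of_dvd _ ⟨4 * p, by ring⟩]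
        have h2 : J % p = (r - 1) % p := by
          apply Int.ModEq.eq
          exact Int.modEq_iff_dvd.mpr ⟨2*u + 2*i + 1, by rw [hJ]; ring⟩
        rw [h1, h2]
      rw [Int.emod_eq_of_lt hw0 hwp] at hwmod
      rcases lt_or_ge 0 r with hr1 | hr1
      · -- r ≥ 1 : impossible since 2u+2i+1 is odd
        exfalso
        have hveq : w = r - 1 := by
          rw [Int.emod_eq_of_lt (by omega) (by omega)] at hwmod
          exact hwmod
        rw [hveq, hJ] at hc
        have hps : p * (2*u + 2*i + 1) = p * ((-4*c) * p) := by linear_combination -hc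
        have hcan := mul_left_cancel₀ (by omega : p ≠ 0) hps
        have heven : (2:ℤ) ∣ (-4*c)*p := ⟨(-2*c)*p, by ring⟩
        rw [← hcan] at heven
        omega
      · -- r = 0
        have hre : r = 0 := by omega
        have hveq : w = p - 1 := by
          rw [hre] at hwmod
          have : (0 - 1 : ℤ) % p = p - 1 := by
            have : (0 - 1 : ℤ) = (p - 1) + p * (-1) := by ring
            rw [this, Int.add_mul_emod_self_left, Int.emod_eq_of_lt (by omega) (by omega)]
          omega
        rw [hveq, hJ, hre] at hc
        have hps : p * (2*u + 2*i + 2) = p * ((-4*c) * p) := by linear_combination -hc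
        have hcan := mul_left_cancel₀ (by omega : p ≠ 0) hps
        have h3 : u + i + 1 = (-2*c) * p := by linarith
        have hb1 : 1 ≤ u + i + 1 := by omega
        have hb2 : u + i + 1 ≤ 3*p - 1 := by omega
        have hc1 : c ≤ -1 := by nlinarith
        have hc2 : -2 < c := by nlinarith
        have hceq : c = -1 := by omega
        rw [hceq] at h3
        have huip : u + i + 1 = 2 * p := by rw [h3]; ring
        -- p ∣ u
        have hdvdu : p ∣ u := by
          apply hcop.dvd_of_dvd_mul_left
          exact Int.dvd_of_emod_eq_zero hre
        obtain ⟨d, hd⟩ := hdvdu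
        have hd0 : d = 0 ∨ d = 1 := by
          rcases lt_trichotomy d 0 with h | h | h
          · exfalso; nlinarith
          · left; exact h
          · right; nlinarith
        rcases hd0 with h | h
        · exfalso; rw [h] at hd; omega
        · rw [h] at hd; constructor <;> omega
    · rintro ⟨hup, hie⟩
      have hre : r = 0 := by
        rw [hr, hup, mul_comm, Int.mul_emod_right]
      have hJval : J = (p - 1) + 4 * p ^ 2 * (-1) := by
        rw [hJ, hre, hup, hie]; ring
      rw [hw, hJval, Int.add_mul_emod_self_left,
        Int.emod_eq_of_lt (by omega) (by nlinarith)]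
      omega
  have hpt : ∀ i ∈ Finset.Ico (0:ℤ) p,
      (if (-((4*p^2-1) * r + 2*p*u) - 1 - (2 * i + 1) * p) % (4 * p ^ 2) < p
        then (1 : ℤ) else 0) = if (u = p ∧ i = p - 1) then 1 else 0 := by
    intro i hi
    simp only [Finset.mem_Ico] at hi
    rcases key i hi.1 hi.2 with ⟨h1, h2⟩
    by_cases hcond : (-((4*p^2-1) * r + 2*p*u) - 1 - (2 * i + 1) * p) % (4 * p ^ 2) < p
    · rw [if_pos hcond, if_pos (h1 hcond)]
    · rw [if_neg hcond, if_neg (fun hx => hcond (h2 hx))]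
  rw [Finset.sum_congr rfl hpt]
  by_cases hup : u = p
  · rw [if_pos hup]
    have hconv : ∀ i ∈ Finset.Ico (0:ℤ) p,
        (if (u = p ∧ i = p - 1) then (1:ℤ) else 0) = if i = p - 1 then 1 else 0 := by
      intro i _; simp [hup]
    rw [Finset.sum_congr rfl hconv, Finset.sum_ite_eq',
      if_pos (by simp only [Finset.mem_Ico]; omega)]
  · rw [if_neg hup]
    have hconv : ∀ i ∈ Finset.Ico (0:ℤ) p,
        (if (u = p ∧ i = p - 1) then (1:ℤ) else 0) = 0 := by
      intro i _; simp [hup]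
    rw [Finset.sum_congr rfl hconv, Finset.sum_const_zero]

lemma par_split (x c D : ℤ) : (c + (x + 2 * D)) % 2 = x % 2 + (1 - 2 * (x % 2)) * (c % 2) := by
  rcases Int.emod_two_eq x with h | h <;> rcases Int.emod_two_eq c with h2 | h2 <;>
    rw [h, h2] <;> omega

lemma main_count (p q : ℤ) (hp : 0 < p) (hq : Odd q) (hcop : IsCoprime p q) :
    ∑ k ∈ Finset.Ico (0:ℤ) (p * (4*p^2 - 1)),
      ((((4*p^2 - 1) * q + 2 * p) * k / (p * (4*p^2 - 1))) % 2)
    = p * (2*p^2 - 1) + (∑ u ∈ Finset.Ico (0:ℤ) p, ((q * u / p) % 2)) + 1 := by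
  have hp2 : (0:ℤ) < 2 * p := by omega
  have hP0 : (0:ℤ) < p * (4*p^2 - 1) := by nlinarith
  set W : ℤ → ℤ := fun u => (4*p^2-1) * ((q*u) % p) + 2*p*u with hW
  set f : ℤ → ℤ := fun k => (((4*p^2 - 1) * q + 2 * p) * k / (p * (4*p^2 - 1))) % 2 with hf
  set π : ℤ → ℤ := fun u => (q * u / p) % 2 with hπ
  set g : ℤ → ℤ → ℤ := fun u t => ((W u + 4 * p ^ 2 * t) / (p * (4 * p ^ 2 - 1))) % 2 with hg
  set D : Finset (ℤ × ℤ) :=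
    (Finset.Ico (0:ℤ) p ×ˢ Finset.Ico (0:ℤ) (2*p^2)) ∪
    (Finset.Ico p (2*p) ×ˢ Finset.Ico (0:ℤ) (2*p^2 - 1)) with hD
  have hdisj : Disjoint (Finset.Ico (0:ℤ) p ×ˢ Finset.Ico (0:ℤ) (2*p^2))
      ((Finset.Ico p (2*p) ×ˢ Finset.Ico (0:ℤ) (2*p^2 - 1))) := by
    rw [Finset.disjoint_left]
    rintro ⟨u, t⟩ h1 h2
    simp only [Finset.mem_product, Finset.mem_Ico] at h1 h2
    omega
  -- step A : reindex
  have stepA : ∑ k ∈ Finset.Ico (0:ℤ) (p * (4*p^2 - 1)), f k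
      = ∑ x ∈ D, f (x.1 + 2*p*x.2) := by
    apply Finset.sum_nbij' (i := fun k => (k % (2*p), k / (2*p))) (j := fun x => x.1 + 2*p*x.2)
    · intro k hk
      simp only [Finset.mem_Ico] at hk
      have hu0 : 0 ≤ k % (2*p) := Int.emod_nonneg k (by omega)
      have hu2 : k % (2*p) < 2*p := Int.emod_lt_of_pos k hp2
      have ht0 : 0 ≤ k / (2*p) := Int.ediv_nonneg hk.1 (by omega)
      have hkeq : 2*p * (k / (2*p)) + k % (2*p) = k := Int.mul_ediv_add_emod k (2*p)
      simp only [hD, Finset.mem_union, Finset.mem_product, Finset.mem_Ico]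
      rcases lt_or_ge (k % (2*p)) p with h | h
      · left
        refine ⟨⟨hu0, h⟩, ht0, ?_⟩
        by_contra hcon
        push_neg at hcon
        have : 2*p * (2*p^2) ≤ 2*p * (k / (2*p)) := by
          apply mul_le_mul_of_nonneg_left hcon (by omega)
        nlinarith [hk.2]
      · right
        refine ⟨⟨h, hu2⟩, ht0, ?_⟩
        by_contra hcon
        push_neg at hcon
        have : 2*p * (2*p^2 - 1) ≤ 2*p * (k / (2*p)) := by
          apply mul_le_mul_of_nonneg_left hcon (by omega)
        nlinarith [hk.2]
    · rintro ⟨u, t⟩ hx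
      simp only [hD, Finset.mem_union, Finset.mem_product, Finset.mem_Ico] at hx
      simp only [Finset.mem_Ico]
      rcases hx with ⟨⟨h1, h2⟩, h3, h4⟩ | ⟨⟨h1, h2⟩, h3, h4⟩ <;>
        constructor <;> nlinarith
    · intro k hk
      show k % (2*p) + 2*p * (k / (2*p)) = k
      have := Int.mul_ediv_add_emod k (2*p)
      linarith
    · rintro ⟨u, t⟩ hx
      simp only [hD, Finset.mem_union, Finset.mem_product, Finset.mem_Ico] at hx
      have hu2 : 0 ≤ u ∧ u < 2*p := by rcases hx with ⟨⟨h1,h2⟩,_⟩|⟨⟨h1,h2⟩,_⟩ <;> omega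
      have e1 : (u + 2*p*t) % (2*p) = u := by
        rw [Int.add_mul_emod_self_left, Int.emod_eq_of_lt hu2.1 hu2.2]
      have e2 : (u + 2*p*t) / (2*p) = t := by
        rw [Int.add_mul_ediv_left _ _ (by omega : (2*p) ≠ 0), ediv_small hu2.1 hu2.2]
        omega
      simp [e1, e2]
    · intro k _
      have : k % (2*p) + 2*p * (k / (2*p)) = k := by
        have := Int.mul_ediv_add_emod k (2*p)
        linarith
      show f k = f (k % (2*p) + 2*p * (k / (2*p)))
      rw [this]
  -- step B : pointwise values
  have stepB : ∀ u t : ℤ, f (u + 2*p*t) = π u + (1 - 2 * π u) * g u t := by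
    intro u t
    have e1 : q * (u + 2*p*t) = q*u + p*(2*(q*t)) := by ring
    have ha : q * (u + 2*p*t) / p = q*u/p + 2*(q*t) := by
      rw [e1, Int.add_mul_ediv_left _ _ (by omega : p ≠ 0)]
    have hrm : (q * (u + 2*p*t)) % p = (q*u) % p := by
      rw [e1, Int.add_mul_emod_self_left]
    have h0 : p * (q * (u + 2*p*t) / p) + (q*u) % p = q * (u + 2*p*t) := by
      rw [← hrm]; exact Int.mul_ediv_add_emod _ p
    have hQk : ((4*p^2 - 1) * q + 2 * p) * (u + 2*p*t)
        = (W u + 4 * p ^ 2 * t) + (p * (4*p^2 - 1)) * (q * (u + 2*p*t) / p) := by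
      have expand : ((4*p^2 - 1) * q + 2 * p) * (u + 2*p*t)
          = (4*p^2-1) * (q * (u + 2*p*t)) + 2*p*(u + 2*p*t) := by ring
      rw [expand]
      simp only [hW]
      linear_combination (1 - 4*p^2) * h0
    show (((4*p^2 - 1) * q + 2 * p) * (u + 2*p*t) / (p * (4*p^2 - 1))) % 2 = _
    rw [hQk, Int.add_mul_ediv_left _ _ (by omega : (p * (4*p^2 - 1)) ≠ 0), ha]
    exact par_split (q*u/p) ((W u + 4 * p ^ 2 * t) / (p * (4*p^2 - 1))) (q*t)
  -- heart applications
  have hWub : ∀ u : ℤ, 0 ≤ u → u < 2*p → 0 ≤ W u ∧ W u ≤ p * (4 * p ^ 2 - 1) + 1 - 2 * p := by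
    intro u h0 h2
    have hr0 : 0 ≤ (q*u) % p := Int.emod_nonneg _ (by omega)
    have hrp : (q*u) % p < p := Int.emod_lt_of_pos _ hp
    simp only [hW]
    refine ⟨by nlinarith, by nlinarith⟩
  have heart1 : ∀ u : ℤ, 0 ≤ u → u < p →
      ∑ t ∈ Finset.Ico (0:ℤ) (2*p^2), g u t = p * p := by
    intro u h0 h2
    have := heart p (W u) (2*p^2) 0 hp (hWub u h0 (by omega)).1 (hWub u h0 (by omega)).2
      (Or.inl rfl) ?_
    · rw [hg]; simpa using this
    · simp only [hW]
      rw [Ecalc p q u hp hq hcop h0 (by omega)]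
      rw [if_neg (by omega)]
  have heart2 : ∀ u : ℤ, p ≤ u → u < 2*p →
      ∑ t ∈ Finset.Ico (0:ℤ) (2*p^2 - 1), g u t = p * p - (if u = p then 1 else 0) := by
    intro u h0 h2
    have hWlb : 2 * p ^ 2 ≤ W u := by
      have hr0 : 0 ≤ (q*u) % p := Int.emod_nonneg _ (by omega)
      simp only [hW]
      nlinarith
    have := heart p (W u) (2*p^2 - 1) (if u = p then 1 else 0) hp
      (hWub u (by omega) h2).1 (hWub u (by omega) h2).2 (Or.inr ⟨rfl, hWlb⟩) ?_
    · rw [hg]; simpa using this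
    · simp only [hW]
      exact Ecalc p q u hp hq hcop (by omega) h2
  -- shift lemma for π
  have hflip : ∀ v : ℤ, π (v + p) = 1 - π v := by
    intro v
    have e1 : q * (v + p) = q*v + p*q := by ring
    have ha : q * (v + p) / p = q*v/p + q := by
      rw [e1, Int.add_mul_ediv_left _ _ (by omega : p ≠ 0)]
    show (q * (v + p) / p) % 2 = 1 - (q * v / p) % 2
    rw [ha]
    obtain ⟨s, hs⟩ := hq
    omega
  have hπp : π p = 1 := by
    show (q * p / p) % 2 = 1
    rw [Int.mul_ediv_cancel _ (by omega : p ≠ 0)]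
    exact Int.odd_iff.mp hq
  set Γ : ℤ := ∑ u ∈ Finset.Ico (0:ℤ) p, π u with hΓ
  have hΓ' : ∑ u ∈ Finset.Ico p (2*p), π u = p - Γ := by
    have hre : ∑ u ∈ Finset.Ico p (2*p), π u = ∑ v ∈ Finset.Ico (0:ℤ) p, π (v + p) := by
      apply Finset.sum_nbij' (i := fun u => u - p) (j := fun v => v + p)
      · intro a ha; simp only [Finset.mem_Ico] at ha ⊢; omega
      · intro a ha; simp only [Finset.mem_Ico] at ha ⊢; omega
      · intro a _; omega
      · intro a _; omega
      · intro a _; rw [sub_add_cancel]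
    rw [hre, Finset.sum_congr rfl (fun v _ => hflip v), Finset.sum_sub_distrib,
      Finset.sum_const, Int.card_Ico, nsmul_eq_mul, ← hΓ,
      Int.toNat_of_nonneg (by omega : (0:ℤ) ≤ p - 0)]
    ring
  -- assemble
  rw [stepA, hD, Finset.sum_union hdisj, Finset.sum_product, Finset.sum_product]
  have blk1 : ∑ u ∈ Finset.Ico (0:ℤ) p, ∑ t ∈ Finset.Ico (0:ℤ) (2*p^2),
      f ((u, t).1 + 2*p*(u, t).2) = p * (p * p) := by
    have hinner : ∀ u ∈ Finset.Ico (0:ℤ) p, ∑ t ∈ Finset.Ico (0:ℤ) (2*p^2),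
        f ((u, t).1 + 2*p*(u, t).2) = p * p := by
      intro u hu
      simp only [Finset.mem_Ico] at hu
      calc ∑ t ∈ Finset.Ico (0:ℤ) (2*p^2), f ((u, t).1 + 2*p*(u, t).2)
          = ∑ t ∈ Finset.Ico (0:ℤ) (2*p^2), (π u + (1 - 2 * π u) * g u t) := by
            apply Finset.sum_congr rfl
            intro t _
            exact stepB u t
        _ = (2*p^2) * π u + (1 - 2 * π u) * (p * p) := by
            rw [Finset.sum_add_distrib, ← Finset.mul_sum, heart1 u hu.1 hu.2,
              Finset.sum_const, Int.card_Ico, nsmul_eq_mul,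
              Int.toNat_of_nonneg (by nlinarith : (0:ℤ) ≤ 2*p^2 - 0)]
            ring
        _ = p * p := by ring
    rw [Finset.sum_congr rfl hinner, Finset.sum_const, Int.card_Ico, nsmul_eq_mul,
      Int.toNat_of_nonneg (by omega : (0:ℤ) ≤ p - 0)]
    ring
  have blk2 : ∑ u ∈ Finset.Ico p (2*p), ∑ t ∈ Finset.Ico (0:ℤ) (2*p^2 - 1),
      f ((u, t).1 + 2*p*(u, t).2) = p * (p * p) - (p - Γ) + 1 := by
    have hinner : ∀ u ∈ Finset.Ico p (2*p), ∑ t ∈ Finset.Ico (0:ℤ) (2*p^2 - 1),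
        f ((u, t).1 + 2*p*(u, t).2)
        = p * p - π u - (if u = p then 1 - 2 * π u else 0) := by
      intro u hu
      simp only [Finset.mem_Ico] at hu
      calc ∑ t ∈ Finset.Ico (0:ℤ) (2*p^2 - 1), f ((u, t).1 + 2*p*(u, t).2)
          = ∑ t ∈ Finset.Ico (0:ℤ) (2*p^2 - 1), (π u + (1 - 2 * π u) * g u t) := by
            apply Finset.sum_congr rfl
            intro t _
            exact stepB u t
        _ = (2*p^2 - 1) * π u + (1 - 2 * π u) * (p * p - (if u = p then 1 else 0)) := by
            rw [Finset.sum_add_distrib, ← Finset.mul_sum, heart2 u hu.1 hu.2,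
              Finset.sum_const, Int.card_Ico, nsmul_eq_mul,
              Int.toNat_of_nonneg (by nlinarith : (0:ℤ) ≤ 2*p^2 - 1 - 0)]
            ring
        _ = p * p - π u - (if u = p then 1 - 2 * π u else 0) := by
            by_cases h : u = p
            · rw [if_pos h, if_pos h]; ring
            · rw [if_neg h, if_neg h]; ring
    rw [Finset.sum_congr rfl hinner]
    rw [Finset.sum_sub_distrib, Finset.sum_sub_distrib, Finset.sum_const, Int.card_Ico,
      nsmul_eq_mul, Int.toNat_of_nonneg (by omega : (0:ℤ) ≤ 2*p - p), hΓ']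
    have hite : ∑ u ∈ Finset.Ico p (2*p), (if u = p then 1 - 2 * π u else 0)
        = 1 - 2 * π p := by
      rw [Finset.sum_ite_eq', if_pos (by simp only [Finset.mem_Ico]; omega)]
    rw [hite, hπp]
    ring
  rw [blk1, blk2]
  ring

lemma reflect (P Q : ℤ) (hP : 0 < P) (hcop : IsCoprime P Q) :
    ∑ k ∈ Finset.Ico (0:ℤ) P, (((2*P - Q) * k / P) % 2)
      = (P - 1) - ∑ k ∈ Finset.Ico (0:ℤ) P, ((Q * k / P) % 2) := by
  have hins : Finset.Ico (0 : ℤ) P = insert 0 (Finset.Ico (1 : ℤ) P) := by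
    ext x; simp [Finset.mem_Ico]; omega
  have hpt : ∀ k ∈ Finset.Ico (1:ℤ) P,
      ((2*P - Q) * k / P) % 2 = 1 - ((Q * k / P) % 2) := by
    intro k hk
    simp only [Finset.mem_Ico] at hk
    have hnd : ¬ P ∣ Q * k := by
      intro hd
      have := hcop.dvd_of_dvd_mul_left hd
      have := Int.le_of_dvd (by omega) this
      omega
    have e1 : (2*P - Q) * k = (-(Q * k)) + P * (2 * k) := by ring
    rw [e1, Int.add_mul_ediv_left _ _ (by omega : P ≠ 0), neg_ediv hP hnd]
    omega
  rw [hins, Finset.sum_insert (by simp), Finset.sum_insert (by simp),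
    Finset.sum_congr rfl hpt, Finset.sum_sub_distrib, Finset.sum_const,
    Int.card_Ico, nsmul_eq_mul, Int.toNat_of_nonneg (by omega : (0:ℤ) ≤ P - 1)]
  norm_num

/-- Let `p` and `q` be relatively prime odd integers with `p ≥ 3` and `0 < q < p`. Then
`d(4p³ − p, (4p² − 1)q + 2p) = d(p, q) + 2` and `d(4p³ − p, (4p² − 1)q − 2p) = d(p, q) − 2`. -/
theorem diagElem_change (p q : ℤ) (hcop : IsCoprime p q) (hpodd : Odd p) (hqodd : Odd q)
    (hp : 3 ≤ p) (hq0 : 0 < q) (hqp : q < p) :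
    diagElem (4 * p ^ 3 - p) ((4 * p ^ 2 - 1) * q + 2 * p) = diagElem p q + 2 ∧
    diagElem (4 * p ^ 3 - p) ((4 * p ^ 2 - 1) * q - 2 * p) = diagElem p q - 2 := by
  have hp0 : (0:ℤ) < p := by omega
  have hP0 : (0:ℤ) < p * (4*p^2 - 1) := by nlinarith
  have hPeq : 4 * p ^ 3 - p = p * (4 * p ^ 2 - 1) := by ring
  have hΓeq := diagElem_eq p q hp0
  set Γ : ℤ := ∑ u ∈ Finset.Ico (0:ℤ) p, ((q * u / p) % 2) with hΓ
  constructor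
  · rw [hPeq, diagElem_eq _ _ hP0, main_count p q hp0 hqodd hcop, hΓeq]
    ring
  · -- reflection path
    have hq' : Odd (2*p - q) := Even.sub_odd ⟨p, by ring⟩ hqodd
    obtain ⟨a, b, hab⟩ := hcop
    have hc3 : IsCoprime p ((4*p^2-1) * (2*p - q) + 2*p) :=
      ⟨a - b*(8*p^2 - 4*p*q), b, by linear_combination hab⟩
    have hc5 : IsCoprime (4*p^2-1) ((4*p^2-1) * (2*p - q) + 2*p) :=
      ⟨-(2*p*(2*p - q) + 1), 2*p, by ring⟩
    have hc6 : IsCoprime (p * (4*p^2-1)) ((4*p^2-1) * (2*p - q) + 2*p) :=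
      IsCoprime.mul_left hc3 hc5
    have hcpq' : IsCoprime p (2*p - q) := ⟨a + 2*b, -b, by linear_combination hab⟩
    have hQeq : (4 * p ^ 2 - 1) * q - 2 * p
        = 2 * (p * (4*p^2 - 1)) - ((4*p^2-1) * (2*p - q) + 2*p) := by ring
    rw [hPeq, hQeq, diagElem_eq _ _ hP0,
      reflect (p * (4*p^2 - 1)) ((4*p^2-1) * (2*p - q) + 2*p) hP0 hc6,
      main_count p (2*p - q) hp0 hq' hcpq',
      reflect p q hp0 ⟨a, b, hab⟩, hΓeq]
    ring
end

section
/- For every integer n ≥ 1 and every ε ∈ {1, −1}, d((2n+1)(4n+1)(4n+3), (4n+1)(4n+3) − 2ε(2n+1)) = −2n − 2ε. (This is the mirror form of the statement d(K_n(ε)) = d(K_n) + 2ε = 2n + 2ε for the 2-bridge knots K_n(ε).) -/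
section DiagElemHelpers
open Finset

lemma ediv_eq_of (a b Q r : ℤ) (hb : 0 < b) (h : r + b * Q = a) (h0 : 0 ≤ r) (h1 : r < b) :
    a / b = Q := ((Int.ediv_emod_unique hb).2 ⟨h, h0, h1⟩).1

lemma floor_eq_ediv (A B : ℤ) (hB : 0 < B) : ⌊(A : ℚ) / (B : ℚ)⌋ = A / B := by
  obtain ⟨m, rfl⟩ := Int.eq_ofNat_of_zero_le hB.le
  have h := Rat.floor_intCast_div_natCast A m
  simpa using h

lemma negOnePow_formula (v : ℤ) : ((v.negOnePow : ℤˣ) : ℤ) = 1 - 2 * v + 4 * (v / 2) := by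
  rcases Int.even_or_odd v with ⟨w, rfl⟩ | ⟨w, rfl⟩
  · rw [Int.negOnePow_even _ ⟨w, rfl⟩]
    push_cast
    omega
  · rw [Int.negOnePow_odd _ ⟨w, rfl⟩]
    push_cast
    omega

lemma ediv_ediv_two (x p : ℤ) (hp : 0 < p) : x / p / 2 = x / (2 * p) := by
  have h2p : (0:ℤ) < 2 * p := by linarith
  have h3 := Int.mul_ediv_add_emod x (2 * p)
  have h0 := Int.emod_nonneg x (by linarith : (2:ℤ) * p ≠ 0)
  have h1 := Int.emod_lt_of_pos x h2p
  set D := x / (2 * p) with hD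
  set R := x % (2 * p) with hR
  have hx : x = R + p * (2 * D) := by linarith
  have hxp : x / p = R / p + 2 * D := by
    rw [hx, Int.add_mul_ediv_left _ _ (by linarith : p ≠ 0)]
  have hRp0 : 0 ≤ R / p := Int.ediv_nonneg h0 hp.le
  have hRp1 : R / p ≤ 1 := by
    have hmono := Int.ediv_le_ediv hp (show R ≤ 2 * p - 1 by linarith)
    have : (2 * p - 1) / p = 1 :=
      ediv_eq_of _ _ _ (p - 1) hp (by ring) (by linarith) (by linarith)
    linarith
  omega

lemma gauss_sum_nat (m : ℕ) : 2 * ∑ j ∈ Icc (1:ℤ) (m:ℤ), j = (m:ℤ) * ((m:ℤ) + 1) := by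
  induction m with
  | zero => simp
  | succ k ih =>
    have hins : Icc (1:ℤ) ((k:ℤ) + 1) = insert ((k:ℤ) + 1) (Icc 1 (k:ℤ)) := by
      ext x; simp only [mem_Icc, mem_insert]; omega
    push_cast
    rw [hins, Finset.sum_insert (by simp only [mem_Icc]; omega)]
    push_cast at ih
    ring_nf
    ring_nf at ih
    linarith

lemma gauss_sum (N : ℤ) (hN : 0 ≤ N) : 2 * ∑ j ∈ Icc (1:ℤ) N, j = N * (N + 1) := by
  obtain ⟨m, rfl⟩ := Int.eq_ofNat_of_zero_le hN
  exact gauss_sum_nat m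

lemma sum_const_Icc (N α : ℤ) (hN : 0 ≤ N) : ∑ _j ∈ Icc (1:ℤ) N, α = N * α := by
  rw [Finset.sum_const, nsmul_eq_mul]
  have h := Int.card_Icc_of_le (a := (1:ℤ)) (b := N) (by omega)
  rw [h]
  ring

lemma sum_linear (N α β : ℤ) (hN : 0 ≤ N) :
    2 * ∑ j ∈ Icc (1:ℤ) N, (α + β * j) = 2 * N * α + β * (N * (N + 1)) := by
  rw [Finset.sum_add_distrib, ← Finset.mul_sum, sum_const_Icc N α hN]
  linear_combination β * gauss_sum N hN

lemma sum_eq_sum_card (s : Finset ℤ) (g : ℤ → ℤ) (M : ℤ)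
    (hg : ∀ k ∈ s, 0 ≤ g k ∧ g k ≤ M) :
    ∑ k ∈ s, g k = ∑ j ∈ Icc (1:ℤ) M, ((s.filter (fun k => j ≤ g k)).card : ℤ) := by
  have step : ∀ k ∈ s, g k = ∑ j ∈ Icc (1:ℤ) M, (if j ≤ g k then (1:ℤ) else 0) := by
    intro k hk
    rw [Finset.sum_boole]
    have hfil : (Icc (1:ℤ) M).filter (fun j => j ≤ g k) = Icc 1 (g k) := by
      ext j
      simp only [mem_filter, mem_Icc]
      constructor
      · rintro ⟨⟨h1, _⟩, h3⟩; exact ⟨h1, h3⟩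
      · rintro ⟨h1, h2⟩; exact ⟨⟨h1, le_trans h2 (hg k hk).2⟩, h2⟩
    rw [hfil]
    rw [Int.card_Icc]
    simp only [Int.toNat_of_nonneg (by have := (hg k hk).1; omega : (0:ℤ) ≤ g k + 1 - 1)]
    omega
  rw [Finset.sum_congr rfl step, Finset.sum_comm]
  refine Finset.sum_congr rfl fun j _ => ?_
  rw [Finset.sum_boole]

lemma le_mul_iff_ediv_succ_le (x q k : ℤ) (hq : 0 < q) (hnd : ¬ q ∣ x) :
    x ≤ q * k ↔ x / q + 1 ≤ k := by
  have h0 := Int.emod_nonneg x (by omega : q ≠ 0)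
  have h1 := Int.emod_lt_of_pos x hq
  have h2 : x % q ≠ 0 := fun h => hnd (Int.dvd_of_emod_eq_zero h)
  have h3 := Int.mul_ediv_add_emod x q
  constructor
  · intro h
    by_contra hcon
    push_neg at hcon
    have hk : k ≤ x / q := by omega
    have := mul_le_mul_of_nonneg_left hk hq.le
    have hR : 1 ≤ x % q := by omega
    linarith
  · intro h
    have := mul_le_mul_of_nonneg_left h hq.le
    have hexp : q * (x / q + 1) = q * (x / q) + q := by ring
    linarith

lemma cdiv (c t j : ℤ) (hc : 0 < c) (ht : 0 < t) (h1 : 1 ≤ j) (h2 : j ≤ c * t) :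
    c * j / (c * t + 1) = (j - 1) / t := by
  have hq : (0:ℤ) < c * t + 1 := by positivity
  have hs0 := Int.emod_nonneg (j - 1) (by omega : t ≠ 0)
  have hs1 := Int.emod_lt_of_pos (j - 1) ht
  have hds := Int.mul_ediv_add_emod (j - 1) t
  have hi0 : 0 ≤ (j - 1) / t := Int.ediv_nonneg (by omega) ht.le
  have hiC : (j - 1) / t ≤ c - 1 := by
    have hm := Int.ediv_le_ediv ht (show j - 1 ≤ c * t - 1 by linarith)
    have he : (c * t - 1) / t = c - 1 :=
      ediv_eq_of _ _ _ (t - 1) ht (by ring) (by linarith) (by linarith)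
    linarith
  refine ediv_eq_of _ _ _ (c * ((j - 1) % t + 1) - (j - 1) / t) hq ?_ ?_ ?_
  · linear_combination c * hds
  · have hcs : c * 1 ≤ c * ((j - 1) % t + 1) :=
      mul_le_mul_of_nonneg_left (by linarith) hc.le
    linarith
  · have hcs : c * ((j - 1) % t + 1) ≤ c * t :=
      mul_le_mul_of_nonneg_left (by linarith) hc.le
    linarith

set_option maxHeartbeats 2000000 in
lemma master (d u : ℤ) (hd : 1 ≤ d) (hu : 1 ≤ u) :
    diagElem ((2*d+1) * ((2*d+1)*u + 1)) (2*(2*d+1)*u + 1) = u - 2*d := by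
  set c : ℤ := 2*d+1 with hc_def
  set p : ℤ := c * (c*u+1) with hp_def
  set q : ℤ := 2*c*u+1 with hq_def
  set Q : ℤ := c*u with hQ_def
  have hc3 : 3 ≤ c := by omega
  have hQ1 : 3 ≤ Q := by rw [hQ_def]; nlinarith
  have hq0 : 0 < q := by rw [hq_def]; nlinarith
  have hp0 : 0 < p := by rw [hp_def]; nlinarith
  have hp4 : 4 ≤ p - 1 := by rw [hp_def]; nlinarith
  have h2p0 : (0:ℤ) < 2*p := by linarith
  have hBez : q*q - 4*u*p = 1 := by rw [hq_def, hp_def, hQ_def]; ring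
  have hqQ : q = 2*Q+1 := by rw [hq_def, hQ_def]; ring
  have hndvd_p : ∀ k : ℤ, 1 ≤ k → k ≤ p - 1 → ¬ p ∣ q * k := by
    intro k h1 h2 hdvd
    have hk : p ∣ k := by
      have hkeq : k = q * (q * k) - p * (4 * (u * k)) := by linear_combination k * hBez
      rw [hkeq]
      exact dvd_sub (hdvd.mul_left q) (dvd_mul_right p _)
    have := Int.le_of_dvd (by omega) hk
    omega
  have hndvd_q : ∀ j : ℤ, 1 ≤ j → j ≤ Q → ¬ q ∣ 2 * p * j := by
    intro j h1 h2 hdvd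
    have hj : q ∣ j := by
      have hjeq : j = q * (q * j) - (2 * p * j) * (2 * u) := by linear_combination j * hBez
      rw [hjeq]
      exact dvd_sub (dvd_mul_right q _) (hdvd.mul_right _)
    have := Int.le_of_dvd (by omega) hj
    omega
  have hpair : ∀ k ∈ Icc (1:ℤ) (p-1), q*k/p + q*(p-k)/p = q - 1 := by
    intro k hk
    rw [mem_Icc] at hk
    have hnd := hndvd_p k hk.1 hk.2
    have h3 := Int.mul_ediv_add_emod (q*k) p
    have h0 := Int.emod_nonneg (q*k) (by omega : p ≠ 0)
    have h1 := Int.emod_lt_of_pos (q*k) hp0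
    have h2 : (q*k) % p ≠ 0 := fun h => hnd (Int.dvd_of_emod_eq_zero h)
    have h2' : 0 < (q*k) % p := lt_of_le_of_ne h0 (Ne.symm h2)
    have hneg : q*(p-k)/p = q - 1 - q*k/p := by
      refine ediv_eq_of _ _ _ (p - (q*k) % p) hp0 ?_ (by linarith) (by linarith)
      linear_combination -h3
    rw [hneg]; ring
  set X : ℤ := ∑ k ∈ Icc (1:ℤ) (p-1), q*k/p with hX_def
  have hrefl : X = ∑ k ∈ Icc (1:ℤ) (p-1), q*(p-k)/p := by
    rw [hX_def]
    refine Finset.sum_nbij' (fun k => p - k) (fun k => p - k) ?_ ?_ ?_ ?_ ?_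
    · intro a ha; simp only [mem_Icc] at ha ⊢; omega
    · intro a ha; simp only [mem_Icc] at ha ⊢; omega
    · intro a _; show p - (p - a) = a; ring
    · intro a _; show p - (p - a) = a; ring
    · intro a _; show q*a/p = q*(p - (p - a))/p; rw [show p - (p - a) = a by ring]
  have hEX : 2 * X = (p - 1) * (q - 1) := by
    have hXX : X + X = ∑ k ∈ Icc (1:ℤ) (p-1), (q*k/p + q*(p-k)/p) := by
      rw [Finset.sum_add_distrib, ← hX_def, ← hrefl]
    calc 2 * X = X + X := by ring
    _ = ∑ k ∈ Icc (1:ℤ) (p-1), (q*k/p + q*(p-k)/p) := hXX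
    _ = ∑ _k ∈ Icc (1:ℤ) (p-1), (q-1) := Finset.sum_congr rfl hpair
    _ = (p-1) * (q-1) := sum_const_Icc _ _ (by omega)
  set Y : ℤ := ∑ k ∈ Icc (1:ℤ) (p-1), q*k/(2*p) with hY_def
  set Z : ℤ := ∑ j ∈ Icc (1:ℤ) Q, (j-1)/(2*u) with hZ_def
  have hEY : Y = (∑ j ∈ Icc (1:ℤ) Q, ((p-1) + (-c)*j)) - Z := by
    have hbound : ∀ k ∈ Icc (1:ℤ) (p-1), 0 ≤ q*k/(2*p) ∧ q*k/(2*p) ≤ Q := by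
      intro k hk
      rw [mem_Icc] at hk
      refine ⟨Int.ediv_nonneg (mul_nonneg hq0.le (by linarith)) (by linarith), ?_⟩
      have hlt : q*k/(2*p) < Q + 1 := by
        rw [Int.ediv_lt_iff_lt_mul h2p0]
        have h1 : q * k ≤ q * (p-1) := mul_le_mul_of_nonneg_left hk.2 hq0.le
        have h2 : (Q+1)*(2*p) = q*p + p := by rw [hqQ]; ring
        nlinarith
      exact Int.lt_add_one_iff.mp hlt
    have hcnt := sum_eq_sum_card (Icc (1:ℤ) (p-1)) (fun k => q*k/(2*p)) Q hbound
    rw [hY_def, hcnt, hZ_def, ← Finset.sum_sub_distrib]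
    refine Finset.sum_congr rfl ?_
    intro j hj
    rw [mem_Icc] at hj
    have hnd := hndvd_q j hj.1 hj.2
    have hdivle : 2*p*j/q ≤ p - 1 := by
      have hlt : 2*p*j/q < p := by
        rw [Int.ediv_lt_iff_lt_mul hq0]
        have h1 : 2*p*j ≤ 2*p*Q := mul_le_mul_of_nonneg_left hj.2 (by linarith)
        have h2 : 2*p*Q = p*(q-1) := by rw [hqQ]; ring
        nlinarith
      have := Int.lt_iff_add_one_le.mp hlt
      linarith
    have hfil : (Icc (1:ℤ) (p-1)).filter (fun k => j ≤ q*k/(2*p)) = Icc (2*p*j/q + 1) (p-1) := by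
      ext k
      simp only [mem_filter, mem_Icc]
      have hiff : j ≤ q*k/(2*p) ↔ 2*p*j/q + 1 ≤ k := by
        rw [Int.le_ediv_iff_mul_le h2p0, show j * (2*p) = 2*p*j by ring]
        exact le_mul_iff_ediv_succ_le (2*p*j) q k hq0 hnd
      constructor
      · rintro ⟨⟨hk1, hk2⟩, h3⟩
        exact ⟨hiff.1 h3, hk2⟩
      · rintro ⟨h1, h2⟩
        have h0 : 0 ≤ 2*p*j/q := Int.ediv_nonneg (by nlinarith) hq0.le
        exact ⟨⟨by linarith, h2⟩, hiff.2 h1⟩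
    rw [hfil]
    have hcard : ((Icc (2*p*j/q + 1) (p-1)).card : ℤ) = p - 1 - 2*p*j/q := by
      rw [Int.card_Icc_of_le (a := 2*p*j/q + 1) (b := p-1) (by linarith)]
      ring
    rw [hcard]
    have hsplit : 2*p*j = c*j + q*(c*j) := by rw [hp_def, hq_def, hQ_def]; ring
    have hdiv1 : 2*p*j/q = c*j/q + c*j := by
      rw [hsplit, Int.add_mul_ediv_left _ _ (by omega : q ≠ 0)]
    have hdiv2 : c*j/q = (j-1)/(2*u) := by
      have hcu : c*(2*u) = Q + Q := by rw [hQ_def]; ring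
      have hje : j ≤ c * (2*u) := by linarith [hj.2]
      have h := cdiv c (2*u) j (by omega) (by linarith) hj.1 hje
      rw [show c*(2*u)+1 = q by rw [hq_def]; ring] at h
      exact h
    rw [hdiv1, hdiv2]
    ring
  have hEZ : 2 * Z = 2*d*Q + (-(2*u))*(d*(d+1)) := by
    have hbound : ∀ j ∈ Icc (1:ℤ) Q, 0 ≤ (j-1)/(2*u) ∧ (j-1)/(2*u) ≤ d := by
      intro j hj
      rw [mem_Icc] at hj
      refine ⟨Int.ediv_nonneg (by omega) (by linarith), ?_⟩
      have hlt : (j-1)/(2*u) < d + 1 := by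
        rw [Int.ediv_lt_iff_lt_mul (by linarith : (0:ℤ) < 2*u)]
        have h2 : (d+1)*(2*u) = Q + u := by rw [hQ_def, hc_def]; ring
        linarith [hj.2]
      exact Int.lt_add_one_iff.mp hlt
    have hcnt := sum_eq_sum_card (Icc (1:ℤ) Q) (fun j => (j-1)/(2*u)) d hbound
    have hstep : Z = ∑ i ∈ Icc (1:ℤ) d, (Q + (-(2*u))*i) := by
      rw [hZ_def, hcnt]
      refine Finset.sum_congr rfl ?_
      intro i hi
      rw [mem_Icc] at hi
      have hfil : (Icc (1:ℤ) Q).filter (fun j => i ≤ (j-1)/(2*u)) = Icc (2*u*i + 1) Q := by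
        ext j
        simp only [mem_filter, mem_Icc]
        have hiff : i ≤ (j-1)/(2*u) ↔ 2*u*i + 1 ≤ j := by
          rw [Int.le_ediv_iff_mul_le (by linarith : (0:ℤ) < 2*u),
            show i * (2*u) = 2*u*i by ring]
          omega
        constructor
        · rintro ⟨⟨h1, h2⟩, h3⟩; exact ⟨hiff.1 h3, h2⟩
        · rintro ⟨h1, h2⟩
          have h4 : 0 ≤ 2*u*i := by nlinarith
          exact ⟨⟨by linarith, h2⟩, hiff.2 h1⟩
      rw [hfil]
      have hui : 2*u*i ≤ Q - u := by
        have h1 : 2*u*i ≤ 2*u*d := mul_le_mul_of_nonneg_left hi.2 (by linarith)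
        have h2 : 2*u*d = Q - u := by rw [hQ_def, hc_def]; ring
        linarith
      rw [Int.card_Icc_of_le (a := 2*u*i + 1) (b := Q) (by linarith)]
      ring
    rw [hstep]
    exact sum_linear d Q (-(2*u)) (by omega)
  have hA : 2 * ∑ j ∈ Icc (1:ℤ) Q, ((p-1) + (-c)*j) = 2*Q*(p-1) + (-c)*(Q*(Q+1)) :=
    sum_linear Q (p-1) (-c) (by omega)
  rw [diagElem]
  have hterm : ∀ k ∈ Icc (1:ℤ) (p-1),
      ((⌊(q : ℚ) * (k : ℚ) / (p : ℚ)⌋).negOnePow : ℤ) = 1 - 2*(q*k/p) + 4*(q*k/(2*p)) := by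
    intro k hk
    have hcast : (q : ℚ) * (k : ℚ) / (p : ℚ) = ((q*k : ℤ) : ℚ) / ((p : ℤ) : ℚ) := by
      push_cast; ring
    rw [hcast, floor_eq_ediv _ _ hp0, negOnePow_formula, ediv_ediv_two _ _ hp0]
  rw [Finset.sum_congr rfl hterm]
  have hsum : ∑ k ∈ Icc (1:ℤ) (p-1), (1 - 2*(q*k/p) + 4*(q*k/(2*p)))
      = (∑ _k ∈ Icc (1:ℤ) (p-1), (1:ℤ)) - 2*X + 4*Y := by
    rw [Finset.sum_add_distrib, Finset.sum_sub_distrib, ← Finset.mul_sum, ← Finset.mul_sum,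
      ← hX_def, ← hY_def]
  rw [hsum, sum_const_Icc _ _ (by omega)]
  have h4Y : 4*Y = 2*(2*Q*(p-1) + (-c)*(Q*(Q+1))) - 2*(2*d*Q + (-(2*u))*(d*(d+1))) := by
    rw [hEY]; linarith [hA, hEZ]
  simp only [hQ_def, hq_def, hp_def, hc_def] at hEX h4Y ⊢
  linear_combination hEX - h4Y

end DiagElemHelpers

/-- For every integer `n ≥ 1` and every `ε ∈ {1, −1}`,
`d((2n+1)(4n+1)(4n+3), (4n+1)(4n+3) − 2ε(2n+1)) = −2n − 2ε`. -/
theorem diagElem_torusFamily (n : ℤ) (hn : 1 ≤ n) (ε : ℤ) (hε : ε = 1 ∨ ε = -1) :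
    diagElem ((2 * n + 1) * (4 * n + 1) * (4 * n + 3))
      ((4 * n + 1) * (4 * n + 3) - 2 * ε * (2 * n + 1)) = -2 * n - 2 * ε := by
  rcases hε with rfl | rfl
  · have h := master (2*n+1) (2*n) (by omega) (by omega)
    have e1 : (2*(2*n+1)+1) * ((2*(2*n+1)+1)*(2*n) + 1) = (2*n+1)*(4*n+1)*(4*n+3) := by ring
    have e2 : 2*(2*(2*n+1)+1)*(2*n) + 1 = (4*n+1)*(4*n+3) - 2*1*(2*n+1) := by ring
    rw [e1, e2] at h
    rw [h]; ring
  · have h := master (2*n) (2*n+2) (by omega) (by omega)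
    have e1 : (2*(2*n)+1) * ((2*(2*n)+1)*(2*n+2) + 1) = (2*n+1)*(4*n+1)*(4*n+3) := by ring
    have e2 : 2*(2*(2*n)+1)*(2*n+2) + 1 = (4*n+1)*(4*n+3) - 2*(-1)*(2*n+1) := by ring
    rw [e1, e2] at h
    rw [h]; ring
end

section
/- Fix an integer n ≥ 1 and ε ∈ {1, −1}. Let M, B, C be the 2×2 integer matrices with rows M = ((1, −2), (2, −3)), B = ((1, 0), (2ε, 1)), and C = ((1, −2ε), (0, 1)) (all of determinant 1). Then the matrix product Mⁿ · B · M⁻ⁿ · C · Mⁿ has (2,2)-entry equal to (−1)^{n+1}(2n+1)(4n+1)(4n+3) and (1,2)-entry equal to (−1)^{n+1}(2n(4n+1)(4n+3) + 2ε(2n+1)). -/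
lemma Mpow (n : ℕ) : (!![1, -2; 2, -3] : Matrix (Fin 2) (Fin 2) ℤ) ^ n =
    ((-1 : ℤ) ^ n) • !![1 - 2*(n:ℤ), 2*(n:ℤ); -(2*(n:ℤ)), 1 + 2*(n:ℤ)] := by
  induction n with
  | zero => simp; ext i j; fin_cases i <;> fin_cases j <;> simp
  | succ k ih =>
      rw [pow_succ, ih]
      push_cast
      ext i j
      fin_cases i <;> fin_cases j <;>
        simp [Matrix.mul_apply, Fin.sum_univ_two, pow_succ] <;> ring

lemma Minv : (!![1, -2; 2, -3] : Matrix (Fin 2) (Fin 2) ℤ)⁻¹ = !![-3, 2; -2, 1] := by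
  have : (!![1, -2; 2, -3] : Matrix (Fin 2) (Fin 2) ℤ) * !![-3, 2; -2, 1] = 1 := by
    ext i j; fin_cases i <;> fin_cases j <;> simp [Matrix.mul_apply, Fin.sum_univ_two]
  exact Matrix.inv_eq_right_inv this

lemma Minvpow (n : ℕ) : ((!![1, -2; 2, -3] : Matrix (Fin 2) (Fin 2) ℤ)⁻¹) ^ n =
    ((-1 : ℤ) ^ n) • !![1 + 2*(n:ℤ), -(2*(n:ℤ)); 2*(n:ℤ), 1 - 2*(n:ℤ)] := by
  rw [Minv]
  induction n with
  | zero => simp; ext i j; fin_cases i <;> fin_cases j <;> simp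
  | succ k ih =>
      rw [pow_succ, ih]
      push_cast
      ext i j
      fin_cases i <;> fin_cases j <;>
        simp [Matrix.mul_apply, Fin.sum_univ_two, pow_succ] <;> ring

/-- Fix an integer `n ≥ 1` and `ε ∈ {1, −1}`. Let `M`, `B`, `C` be the 2×2 integer matrices
`M = ((1, −2), (2, −3))`, `B = ((1, 0), (2ε, 1))`, `C = ((1, −2ε), (0, 1))`. Then the product
`Mⁿ · B · M⁻ⁿ · C · Mⁿ` has `(2,2)`-entry `(−1)^{n+1}(2n+1)(4n+1)(4n+3)` and `(1,2)`-entry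
`(−1)^{n+1}(2n(4n+1)(4n+3) + 2ε(2n+1))`. -/
theorem matrix_product_entries (n : ℕ) (hn : 1 ≤ n) (ε : ℤ) (hε : ε = 1 ∨ ε = -1) :
    (((!![1, -2; 2, -3] : Matrix (Fin 2) (Fin 2) ℤ) ^ n * !![1, 0; 2 * ε, 1] *
        ((!![1, -2; 2, -3] : Matrix (Fin 2) (Fin 2) ℤ)⁻¹) ^ n * !![1, -2 * ε; 0, 1] *
        (!![1, -2; 2, -3] : Matrix (Fin 2) (Fin 2) ℤ) ^ n) 1 1 =
      (-1 : ℤ) ^ (n + 1) * ((2 * (n : ℤ) + 1) * (4 * (n : ℤ) + 1) * (4 * (n : ℤ) + 3))) ∧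
    (((!![1, -2; 2, -3] : Matrix (Fin 2) (Fin 2) ℤ) ^ n * !![1, 0; 2 * ε, 1] *
        ((!![1, -2; 2, -3] : Matrix (Fin 2) (Fin 2) ℤ)⁻¹) ^ n * !![1, -2 * ε; 0, 1] *
        (!![1, -2; 2, -3] : Matrix (Fin 2) (Fin 2) ℤ) ^ n) 0 1 =
      (-1 : ℤ) ^ (n + 1) *
        (2 * (n : ℤ) * (4 * (n : ℤ) + 1) * (4 * (n : ℤ) + 3) + 2 * ε * (2 * (n : ℤ) + 1))) := by
  rw [Mpow, Minvpow]
  rcases Nat.even_or_odd n with h | h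
  · have h1 : ((-1 : ℤ)) ^ n = 1 := Even.neg_one_pow h
    rcases hε with he | he <;> subst he <;> constructor <;>
      simp [Matrix.mul_apply, Fin.sum_univ_two, pow_succ, h1] <;> ring
  · have h1 : ((-1 : ℤ)) ^ n = -1 := Odd.neg_one_pow h
    rcases hε with he | he <;> subst he <;> constructor <;>
      simp [Matrix.mul_apply, Fin.sum_univ_two, pow_succ, h1] <;> ring
end

section
/- For every sequence ε : ℕ → {0,1} and every n ≥ 0, q_ε(n) · q'_ε(n) ≡ 1 (mod p(n)). -/
/-- `p(0) = 3`, `p(n+1) = p(n)·(4·p(n)² − 1)`. -/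
def pSeq : ℕ → ℤ
  | 0 => 3
  | n + 1 => pSeq n * (4 * (pSeq n) ^ 2 - 1)

/-- `q_ε(0) = 2`, `q_ε(n+1) = q_ε(n)·(4·p(n)² − 1) + 2·(−1)^{ε(n)+1}·p(n)`. -/
def qSeq (ε : ℕ → ℕ) : ℕ → ℤ
  | 0 => 2
  | n + 1 => qSeq ε n * (4 * (pSeq n) ^ 2 - 1) + 2 * (-1 : ℤ) ^ (ε n + 1) * pSeq n

/-- `q'_ε(0) = −1`, `q'_ε(n+1) = q'_ε(n)·(4·p(n)² − 1) + 2·(−1)^{ε(n)+1}·p(n)`. -/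
def q'Seq (ε : ℕ → ℕ) : ℕ → ℤ
  | 0 => -1
  | n + 1 => q'Seq ε n * (4 * (pSeq n) ^ 2 - 1) + 2 * (-1 : ℤ) ^ (ε n + 1) * pSeq n

lemma q'_eq (ε : ℕ → ℕ) : ∀ n, q'Seq ε n = qSeq ε n - pSeq n := by
  intro n
  induction n with
  | zero => simp [q'Seq, qSeq, pSeq]
  | succ n ih => simp only [q'Seq, qSeq, pSeq, ih]; ring

lemma sq_dvd (ε : ℕ → ℕ) : ∀ n, pSeq n ∣ qSeq ε n ^ 2 - 1 := by
  intro n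
  induction n with
  | zero => simp [qSeq, pSeq]
  | succ n ih =>
    obtain ⟨k, hk⟩ := ih
    have he : ((-1 : ℤ) ^ (ε n + 1)) ^ 2 = 1 := by
      rw [← pow_mul, pow_mul']; simp
    refine ⟨4 * pSeq n + 4 * k * pSeq n ^ 2 - k + 4 * (-1 : ℤ) ^ (ε n + 1) * qSeq ε n, ?_⟩
    simp only [qSeq, pSeq]
    linear_combination (4 * pSeq n ^ 2 - 1) ^ 2 * hk + 4 * pSeq n ^ 2 * he

/-- For every sequence `ε : ℕ → {0,1}` and every `n ≥ 0`,
`q_ε(n) · q'_ε(n) ≡ 1 (mod p(n))`. -/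
theorem qSeq_mul_q'Seq_modEq_one (ε : ℕ → ℕ) (hε : ∀ j, ε j = 0 ∨ ε j = 1) (n : ℕ) :
    qSeq ε n * q'Seq ε n ≡ 1 [ZMOD pSeq n] := by
  rw [Int.modEq_iff_dvd, q'_eq]
  obtain ⟨k, hk⟩ := sq_dvd ε n
  exact ⟨qSeq ε n - k, by linear_combination -hk⟩
end

section
/- For every sequence ε : ℕ → {0,1} and every n ≥ 0: (i) p(n+1) = 3 · ∏_{k=0}^{n} (4·p(k)² − 1); (ii) for each 0 ≤ j ≤ n the integer 4·p(j)² − 1 divides p(n+1); and (iii) 3 · q_ε(n+1) = 2 · p(n+1) + ∑_{j=0}^{n} 6 · (−1)^{ε(j)+1} · (p(n+1) / (4·p(j)² − 1)), where the divisions are exact integer divisions. -/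
lemma d_ne_zero (a : ℤ) : 4 * a ^ 2 - 1 ≠ 0 := by
  have h : a ^ 2 = a * a := sq a
  intro hc
  omega

lemma pSeq_prod (n : ℕ) :
    pSeq (n + 1) = 3 * ∏ k ∈ Finset.range (n + 1), (4 * (pSeq k) ^ 2 - 1) := by
  induction n with
  | zero => simp [pSeq]
  | succ n ih =>
      rw [Finset.prod_range_succ, show pSeq (n + 2) = pSeq (n+1) * (4 * (pSeq (n+1)) ^ 2 - 1) from rfl, ih]
      ring

lemma pSeq_dvd {j n : ℕ} (h : j ≤ n) : (4 * (pSeq j) ^ 2 - 1) ∣ pSeq (n + 1) := by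
  rw [pSeq_prod]
  exact Dvd.dvd.mul_left
    (Finset.dvd_prod_of_mem _ (Finset.mem_range.2 (Nat.lt_succ_of_le h))) 3

lemma qSeq_sum (ε : ℕ → ℕ) (n : ℕ) :
    3 * qSeq ε (n + 1) = 2 * pSeq (n + 1) +
      ∑ j ∈ Finset.range (n + 1),
        6 * (-1 : ℤ) ^ (ε j + 1) * (pSeq (n + 1) / (4 * (pSeq j) ^ 2 - 1)) := by
  induction n with
  | zero =>
      show 3 * (2 * (4 * (pSeq 0) ^ 2 - 1) + 2 * (-1 : ℤ) ^ (ε 0 + 1) * pSeq 0) = _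
      simp [pSeq]
      ring
  | succ n ih =>
      set D : ℤ := 4 * (pSeq (n + 1)) ^ 2 - 1 with hD
      have hp2 : pSeq (n + 2) = pSeq (n + 1) * D := rfl
      have key : ∀ j ∈ Finset.range (n + 1),
          6 * (-1 : ℤ) ^ (ε j + 1) * (pSeq (n + 2) / (4 * (pSeq j) ^ 2 - 1)) =
          (6 * (-1 : ℤ) ^ (ε j + 1) * (pSeq (n + 1) / (4 * (pSeq j) ^ 2 - 1))) * D := by
        intro j hj
        have hdvd : (4 * (pSeq j) ^ 2 - 1) ∣ pSeq (n + 1) :=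
          pSeq_dvd (Nat.lt_succ_iff.mp (Finset.mem_range.1 hj))
        rw [hp2, mul_comm (pSeq (n + 1)) D, Int.mul_ediv_assoc D hdvd]
        ring
      rw [Finset.sum_range_succ, Finset.sum_congr rfl key, ← Finset.sum_mul,
        hp2, Int.mul_ediv_cancel _ (d_ne_zero _)]
      have hq : qSeq ε (n + 2) =
          qSeq ε (n + 1) * D + 2 * (-1 : ℤ) ^ (ε (n + 1) + 1) * pSeq (n + 1) := rfl
      rw [hq]
      nlinarith [ih, sq_nonneg D]

/-- For every sequence `ε : ℕ → {0,1}` and every `n ≥ 0`: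
(i) `p(n+1) = 3 · ∏_{k=0}^{n} (4·p(k)² − 1)`;
(ii) for each `0 ≤ j ≤ n` the integer `4·p(j)² − 1` divides `p(n+1)`; and
(iii) `3 · q_ε(n+1) = 2 · p(n+1) + ∑_{j=0}^{n} 6 · (−1)^{ε(j)+1} · (p(n+1) / (4·p(j)² − 1))`,
where the divisions are exact integer divisions. -/
theorem pSeq_qSeq_closed_form (ε : ℕ → ℕ) (hε : ∀ j, ε j = 0 ∨ ε j = 1) (n : ℕ) :
    pSeq (n + 1) = 3 * ∏ k ∈ Finset.range (n + 1), (4 * (pSeq k) ^ 2 - 1) ∧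
    (∀ j ≤ n, (4 * (pSeq j) ^ 2 - 1) ∣ pSeq (n + 1)) ∧
    3 * qSeq ε (n + 1) = 2 * pSeq (n + 1) +
      ∑ j ∈ Finset.range (n + 1),
        6 * (-1 : ℤ) ^ (ε j + 1) * (pSeq (n + 1) / (4 * (pSeq j) ^ 2 - 1)) := by
  exact ⟨pSeq_prod n, fun j hj => pSeq_dvd hj, qSeq_sum ε n⟩
end

section
/- For every sequence ε : ℕ → {0,1} and every n ≥ 0, the integers p(n) and q_ε(n) are relatively prime, and the integers p(n) and q'_ε(n) are relatively prime. -/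
lemma coprime_step (p q : ℤ) (k : ℕ) (h : IsCoprime p q) :
    IsCoprime (p * (4 * p ^ 2 - 1)) (q * (4 * p ^ 2 - 1) + 2 * (-1 : ℤ) ^ k * p) := by
  have h1 : IsCoprime p (4 * p ^ 2 - 1) := ⟨4 * p, -1, by ring⟩
  have hsq : ((-1 : ℤ) ^ k) ^ 2 = 1 := by
    rcases Nat.even_or_odd k with hk | hk
    · rw [hk.neg_one_pow]; ring
    · rw [hk.neg_one_pow]; ring
  have h2 : IsCoprime (4 * p ^ 2 - 1) (2 * (-1 : ℤ) ^ k * p) := by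
    refine ⟨-1, 2 * (-1 : ℤ) ^ k * p, ?_⟩
    have : (2 * (-1 : ℤ) ^ k * p) * (2 * (-1 : ℤ) ^ k * p) = 4 * ((-1:ℤ)^k)^2 * p^2 := by ring
    rw [mul_comm (2 * (-1 : ℤ) ^ k * p), this, hsq]; ring
  have A : IsCoprime p (q * (4 * p ^ 2 - 1) + 2 * (-1 : ℤ) ^ k * p) :=
    (h.mul_right h1).add_mul_right_right _
  have B : IsCoprime (4 * p ^ 2 - 1) (q * (4 * p ^ 2 - 1) + 2 * (-1 : ℤ) ^ k * p) :=
    h2.mul_add_right_right _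
  exact A.mul_left B

/-- For every sequence `ε : ℕ → {0,1}` and every `n ≥ 0`, the integers `p(n)` and `q_ε(n)` are
relatively prime, and the integers `p(n)` and `q'_ε(n)` are relatively prime. -/
theorem pSeq_coprime_qSeq (ε : ℕ → ℕ) (hε : ∀ j, ε j = 0 ∨ ε j = 1) (n : ℕ) :
    IsCoprime (pSeq n) (qSeq ε n) ∧ IsCoprime (pSeq n) (q'Seq ε n) := by
  induction n with
  | zero => exact ⟨⟨1, -1, by norm_num [pSeq, qSeq]⟩, ⟨0, -1, by norm_num [pSeq, q'Seq]⟩⟩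
  | succ n ih =>
    exact ⟨coprime_step _ _ _ ih.1, coprime_step _ _ _ ih.2⟩
end

section
/- For every n ≥ 0 and every sequence ε : ℕ → {0,1}: the integer p(n) is odd, p(n) ≥ 3, and −p(n) < q'_ε(n) < 0. -/
/-- For every `n ≥ 0` and every sequence `ε : ℕ → {0,1}`: the integer `p(n)` is odd,
`p(n) ≥ 3`, and `−p(n) < q'_ε(n) < 0`. -/
theorem pSeq_odd_ge_three_and_q'Seq_bounds (ε : ℕ → ℕ) (hε : ∀ j, ε j = 0 ∨ ε j = 1)
    (n : ℕ) :
    Odd (pSeq n) ∧ 3 ≤ pSeq n ∧ -pSeq n < q'Seq ε n ∧ q'Seq ε n < 0 := by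
  induction n with
  | zero => refine ⟨⟨1, by norm_num [pSeq]⟩, by norm_num [pSeq], by norm_num [pSeq, q'Seq], by norm_num [q'Seq]⟩
  | succ n ih =>
    obtain ⟨⟨k, hk⟩, hp3, hql, hqu⟩ := ih
    have hq1 : q'Seq ε n ≤ -1 := by omega
    have hq2 : -pSeq n + 1 ≤ q'Seq ε n := by omega
    refine ⟨⟨2 * (pSeq n)^3 - k - 1, by rw [pSeq]; nlinarith [hk]⟩, ?_, ?_, ?_⟩
    · rw [pSeq]; nlinarith
    · rw [pSeq, q'Seq]
      rcases hε n with h | h <;> simp [h] <;> nlinarith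
    · rw [q'Seq]
      rcases hε n with h | h <;> simp [h] <;> nlinarith
end

section
/- For every n ≥ 0 and every sequence ε : ℕ → {0,1}, d(p(n), −q'_ε(n)) = −2 + 2·#{j : 0 ≤ j < n, ε(j) = 0} − 2·#{j : 0 ≤ j < n, ε(j) = 1}; in particular d(p(n), −q'_ε(n)) = 2n − 2 − 4·#{j : 0 ≤ j < n, ε(j) = 1}, so the set of values of d(p(n), −q'_ε(n)) over all ε is {2n − 2 − 4j : j = 0, 1, …, n}. -/
open Finset

set_option maxHeartbeats 2000000


/-- abbreviation for the coerced negOnePow -/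
def NP (m : ℤ) : ℤ := (m.negOnePow : ℤ)

lemma NP_add (m k : ℤ) : NP (m + k) = NP m * NP k := by
  simp [NP, Int.negOnePow_add]

lemma NP_even {m : ℤ} (h : Even m) : NP m = 1 := by simp [NP, Int.negOnePow_even m h]

lemma NP_odd {m : ℤ} (h : Odd m) : NP m = -1 := by simp [NP, Int.negOnePow_odd m h]

lemma NP_congr {m k : ℤ} (h : Even (m - k)) : NP m = NP k := by
  have : m = k + (m - k) := by ring
  rw [this, NP_add, NP_even h, mul_one]

lemma NP_zero : NP 0 = 1 := by simp [NP]

lemma floor_eq_ediv_s11 (a b : ℤ) (hb : 0 < b) : ⌊(a : ℚ) / (b : ℚ)⌋ = a / b := by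
  obtain ⟨n, rfl⟩ := Int.eq_ofNat_of_zero_le hb.le
  exact_mod_cast Rat.floor_intCast_div_natCast a n

lemma ediv_helper {a b v : ℤ} (hb : 0 < b) (h1 : b * v ≤ a) (h2 : a < b * (v + 1)) :
    a / b = v := by
  refine le_antisymm ?_ ?_
  · have := (Int.ediv_lt_iff_lt_mul hb (a := a) (b := v + 1)).2 (by linarith [h2])
    linarith
  · exact (Int.le_ediv_iff_mul_le hb).2 (by linarith)

lemma sum_Ico_top (f : ℤ → ℤ) {a c : ℤ} (h : a ≤ c) :
    ∑ x ∈ Ico a (c + 1), f x = (∑ x ∈ Ico a c, f x) + f c := by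
  have : Ico a (c + 1) = insert c (Ico a c) := by
    ext x; simp only [mem_Ico, mem_insert]; omega
  rw [this, sum_insert (by simp), add_comm]

lemma sum_Ico_consec (f : ℤ → ℤ) {a b c : ℤ} (h1 : a ≤ b) (h2 : b ≤ c) :
    (∑ x ∈ Ico a b, f x) + (∑ x ∈ Ico b c, f x) = ∑ x ∈ Ico a c, f x := by
  rw [← Finset.sum_union (by
    simp only [Finset.disjoint_left, mem_Ico]
    intro x hx hx2; omega), Finset.Ico_union_Ico_eq_Ico h1 h2]

lemma altsum_nat (a : ℤ) : ∀ (n : ℕ), ∑ j ∈ Ico a (a + n), NP j = if Even (n : ℤ) then 0 else NP a := by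
  intro n
  induction n with
  | zero => simp
  | succ n ih =>
      have hc : ((n + 1 : ℕ) : ℤ) = (n : ℤ) + 1 := by push_cast; ring
      rw [hc, ← add_assoc, sum_Ico_top _ (le_add_of_nonneg_right (by positivity)), ih]
      have hcc : NP (a + n) = NP a * NP (n : ℤ) := NP_add a n
      by_cases he : Even (n : ℤ)
      · rw [if_pos he, if_neg (by rcases he with ⟨m, hm⟩; rintro ⟨k, hk⟩; omega), hcc,
          NP_even he]; ring
      · rw [if_neg he, if_pos (by
          rcases Int.even_or_odd (n : ℤ) with h | ⟨m, hm⟩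
          · exact absurd h he
          · exact ⟨m + 1, by omega⟩), hcc, NP_odd (Int.not_even_iff_odd.1 he)]; ring

lemma altsum {a c : ℤ} (h : a ≤ c) :
    ∑ j ∈ Ico a c, NP j = if Even (c - a) then 0 else NP a := by
  obtain ⟨n, rfl⟩ := Int.le.dest h
  rw [altsum_nat a n]
  norm_num

lemma altsum_even {a c : ℤ} (h : a ≤ c) (he : Even (c - a)) :
    ∑ j ∈ Ico a c, NP j = 0 := by rw [altsum h, if_pos he]

lemma altsum_odd {a c : ℤ} (h : a ≤ c) (he : ¬ Even (c - a)) :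
    ∑ j ∈ Ico a c, NP j = NP a := by rw [altsum h, if_neg he]

lemma b_mono_chain (b : ℤ → ℤ) (N : ℕ) (h : ∀ t : ℤ, 0 ≤ t → t < N → b t ≤ b (t + 1)) :
    b 0 ≤ b N := by
  induction N with
  | zero => simp
  | succ n ih =>
      have h1 : b 0 ≤ b n := ih (fun t ht htn => h t ht (by push_cast; omega))
      have h2 : b (n : ℤ) ≤ b ((n : ℤ) + 1) := h n (by positivity) (by push_cast; omega)
      have hc : ((n + 1 : ℕ) : ℤ) = (n : ℤ) + 1 := by push_cast; ring
      rw [hc]; exact h1.trans h2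

lemma sum_parts (f : ℤ → ℤ) (b : ℤ → ℤ) (N : ℕ) (h : ∀ t : ℤ, 0 ≤ t → t < N → b t ≤ b (t + 1)) :
    ∑ x ∈ Ico (b 0) (b N), f x = ∑ t ∈ Ico (0 : ℤ) N, ∑ x ∈ Ico (b t) (b (t + 1)), f x := by
  induction N with
  | zero => simp
  | succ n ih =>
      have hmono : ∀ t : ℤ, 0 ≤ t → t < n → b t ≤ b (t + 1) := fun t ht htn =>
        h t ht (by push_cast; omega)
      have h1 : b 0 ≤ b n := b_mono_chain b n hmono
      have h2 : b (n : ℤ) ≤ b ((n : ℤ) + 1) := h n (by positivity) (by push_cast; omega)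
      have hc : ((n + 1 : ℕ) : ℤ) = (n : ℤ) + 1 := by push_cast; ring
      rw [hc, ← sum_Ico_consec f h1 h2, ih hmono,
        sum_Ico_top _ (by positivity : (0:ℤ) ≤ (n:ℤ))]

lemma altsum_shift {a c : ℤ} (d : ℤ) (h : a ≤ c) :
    ∑ j ∈ Ico a c, NP (j + d) = if Even (c - a) then 0 else NP (a + d) := by
  calc ∑ j ∈ Ico a c, NP (j + d) = ∑ j ∈ Ico a c, NP j * NP d := by
        refine Finset.sum_congr rfl fun j _ => NP_add j d
    _ = (∑ j ∈ Ico a c, NP j) * NP d := by rw [Finset.sum_mul]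
    _ = (if Even (c - a) then 0 else NP a) * NP d := by rw [altsum h]
    _ = _ := by
        by_cases he : Even (c - a)
        · simp [he]
        · simp only [he, if_neg, if_false, NP_add]

set_option maxHeartbeats 2000000 in
lemma genA (P r o : ℤ) (f : ℤ → ℤ) (hP : 3 ≤ P) (ho2 : 2 ≤ o) (hoP : o ≤ 2*P - 2)
    (hoe : Even o) (hr : 1 ≤ r) (hrP : r < P)
    (hf1 : ∀ t j, 0 ≤ t → t ≤ 2*P → 2*P*t - o ≤ j → j < 2*P*t - o + 2*P → 0 ≤ j →
       j < 4*P^2 - 1 → ¬(j = 2*P*t - o + 2*P - 1 ∧ 2*P - 2*r ≤ t) → f j = NP (j + t))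
    (hf2 : ∀ t j, 0 ≤ t → t ≤ 2*P → j = 2*P*t - o + 2*P - 1 → 2*P - 2*r ≤ t → 0 ≤ j →
       j < 4*P^2 - 1 → f j = NP (j + t + 1)) :
    ∑ j ∈ Ico (0:ℤ) (4*P^2 - 1), f j = 1 := by
  obtain ⟨u, rfl⟩ := hoe
  have hP0 : (0:ℤ) < P := by linarith
  have hu1 : 1 ≤ u := by omega
  have huP : u ≤ P - 1 := by omega
  set M : ℤ := 4*P^2 - 1 with hM
  have hMpos : 0 < M := by nlinarith
  set b : ℤ → ℤ := fun t => max 0 (min M (2*P*t - (u+u))) with hbdef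
  set N : ℕ := (2*P+1).toNat with hNdef
  have hN : (N : ℤ) = 2*P + 1 := Int.toNat_of_nonneg (by linarith)
  have hb0 : b 0 = 0 := by
    simp only [hbdef]
    rw [min_eq_right (by linarith), max_eq_left (by linarith)]
  have hbmid : ∀ t : ℤ, 1 ≤ t → t ≤ 2*P → b t = 2*P*t - (u+u) := by
    intro t h1 h2
    have k1 : 2*P*t ≤ 2*P*(2*P) := mul_le_mul_of_nonneg_left h2 (by linarith)
    have k2 : 2*P*1 ≤ 2*P*t := mul_le_mul_of_nonneg_left h1 (by linarith)
    have e1 : 2*P*t - (u+u) ≤ M := by nlinarith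
    have e2 : (0:ℤ) ≤ 2*P*t - (u+u) := by nlinarith
    simp only [hbdef]
    rw [min_eq_right e1, max_eq_right e2]
  have hbtop : b ((2*P) + 1) = M := by
    have h1 : 2*P*(2*P+1) ≤ 2*P*(2*P+1) := le_rfl
    have : M ≤ 2*P*(2*P+1) - (u+u) := by nlinarith
    simp only [hbdef]
    rw [min_eq_left this, max_eq_right (by linarith)]
  have hmono : ∀ t : ℤ, 0 ≤ t → t < (N:ℤ) → b t ≤ b (t + 1) := by
    intro t _ _
    refine max_le_max le_rfl (min_le_min le_rfl ?_)
    nlinarith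
  have hstart : (0:ℤ) = b 0 := hb0.symm
  have hend : M = b (N:ℤ) := by rw [hN, ← hbtop]
  rw [hstart, hend, sum_parts f b N hmono]
  have hgoal : ∀ t ∈ Ico (0:ℤ) (N:ℤ), (∑ x ∈ Ico (b t) (b (t+1)), f x) =
      (if t = 2*P then 1 else (if 2*P - 2*r ≤ t then 2 * NP t else 0)) := by
    intro t ht
    rw [mem_Ico] at ht
    obtain ⟨ht0, htN⟩ := ht
    rw [hN] at htN
    have ht2P : t ≤ 2*P := by linarith
    have hkt : 2*P*t ≤ 2*P*(2*P) := mul_le_mul_of_nonneg_left ht2P (by linarith)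
    have hkt0 : 0 ≤ 2*P*t := mul_nonneg (by linarith) ht0
    by_cases h2P : t = 2*P
    · subst h2P
      rw [if_pos rfl, hbtop, hbmid (2*P) (by linarith) le_rfl]
      have hstart2 : 2*P*(2*P) - (u+u) = 4*P^2 - (u+u) := by ring
      rw [hstart2]
      have hsc : ∀ j ∈ Ico (4*P^2 - (u+u)) M, f j = NP j := by
        intro j hj
        rw [mem_Ico] at hj
        obtain ⟨hj1, hj2⟩ := hj
        have hfj : f j = NP (j + 2*P) := by
          refine hf1 (2*P) j (by linarith) le_rfl (by linarith [hstart2]) ?_ (by nlinarith) (by linarith) ?_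
          · have : 2*P*(2*P) - (u+u) + 2*P = 4*P^2 + 2*P - (u+u) := by ring
            rw [hM] at hj2
            linarith
          · rintro ⟨hje, -⟩
            have : 2*P*(2*P) - (u+u) + 2*P - 1 = 4*P^2 + 2*P - (u+u) - 1 := by ring
            rw [hM] at hj2
            omega
        rw [hfj]
        exact NP_congr ⟨P, by ring⟩
      rw [Finset.sum_congr rfl hsc, altsum (by rw [hM]; nlinarith)]
      rw [hM]
      rw [show 4*P^2 - 1 - (4*P^2 - (u+u)) = u + u - 1 from by ring]
      rw [if_neg (by rintro ⟨m, hm⟩; omega)]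
      exact NP_even ⟨2*P^2 - u, by ring⟩
    · rw [if_neg h2P]
      have ht2P' : t ≤ 2*P - 1 := by omega
      have hbt1 : b (t+1) = 2*P*(t+1) - (u+u) := hbmid (t+1) (by linarith) (by linarith)
      have hkt1 : 2*P*(t+1) ≤ 2*P*(2*P) := mul_le_mul_of_nonneg_left (by linarith) (by linarith)
      by_cases htw : 2*P - 2*r ≤ t
      · rw [if_pos htw]
        have htge : 1 ≤ t := by linarith
        have hkt2 : 2*P*1 ≤ 2*P*t := mul_le_mul_of_nonneg_left htge (by linarith)
        have hbt : b t = 2*P*t - (u+u) := hbmid t htge (by linarith)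
        rw [hbt, hbt1]
        rw [show 2*P*(t+1) - (u+u) = (2*P*t - (u+u) + 2*P - 1) + 1 from by ring]
        rw [sum_Ico_top f (by linarith)]
        have hfirst : ∀ j ∈ Ico (2*P*t - (u+u)) (2*P*t - (u+u) + 2*P - 1), f j = NP (j + t) := by
          intro j hj
          rw [mem_Ico] at hj
          obtain ⟨hj1, hj2⟩ := hj
          refine hf1 t j ht0 ht2P hj1 (by linarith) (by linarith) (by rw [hM]; nlinarith) ?_
          rintro ⟨hje, -⟩
          omega
        rw [Finset.sum_congr rfl hfirst, altsum_shift t (by linarith)]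
        rw [if_neg (by rintro ⟨m, hm⟩; omega)]
        have htop : f (2*P*t - (u+u) + 2*P - 1) = NP ((2*P*t - (u+u) + 2*P - 1) + t + 1) :=
          hf2 t _ ht0 ht2P rfl htw (by linarith) (by rw [hM]; nlinarith)
        rw [htop]
        have e1 : NP (2*P*t - (u+u) + t) = NP t := NP_congr ⟨P*t - u, by ring⟩
        have e2 : NP ((2*P*t - (u+u) + 2*P - 1) + t + 1) = NP t :=
          NP_congr ⟨P*t - u + P, by ring⟩
        rw [e1, e2]; ring
      · rw [if_neg htw]
        have hbt : b t = max 0 (2*P*t - (u+u)) := by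
          rcases eq_or_lt_of_le ht0 with h | h
          · rw [← h, hb0, show 2*P*(0:ℤ) - (u+u) = -(u+u) from by ring,
              max_eq_left (by linarith)]
          · have htge : 1 ≤ t := h
            have hkt2 : 2*P*1 ≤ 2*P*t := mul_le_mul_of_nonneg_left htge (by linarith)
            rw [hbmid t htge (by linarith), max_eq_right (by linarith)]
        rw [hbt, hbt1]
        have hall : ∀ j ∈ Ico (max 0 (2*P*t - (u+u))) (2*P*(t+1) - (u+u)), f j = NP (j + t) := by
          intro j hj
          rw [mem_Ico] at hj
          obtain ⟨hj1, hj2⟩ := hj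
          have hj0 : 0 ≤ j := le_trans (le_max_left _ _) hj1
          have hjl : 2*P*t - (u+u) ≤ j := le_trans (le_max_right _ _) hj1
          refine hf1 t j ht0 ht2P hjl (by linarith) hj0 (by rw [hM]; nlinarith) ?_
          rintro ⟨-, hcon⟩
          omega
        rw [Finset.sum_congr rfl hall, altsum_shift t (by
          refine max_le (by linarith) (by linarith))]
        rw [if_pos ?ev]
        case ev =>
          rcases le_or_gt (2*P*t - (u+u)) 0 with h | h
          · rw [max_eq_left h]
            exact ⟨P*(t+1) - u, by ring⟩
          · rw [max_eq_right h.le]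
            exact ⟨P, by ring⟩
  rw [Finset.sum_congr rfl hgoal, hN]
  have h2P0 : (0:ℤ) ≤ 2*P := by linarith
  rw [sum_Ico_top _ h2P0, if_pos rfl]
  have hrest : ∑ t ∈ Ico (0:ℤ) (2*P), (if t = 2*P then 1 else (if 2*P - 2*r ≤ t then 2 * NP t else 0))
      = ∑ t ∈ Ico (0:ℤ) (2*P), (if 2*P - 2*r ≤ t then 2 * NP t else 0) := by
    refine Finset.sum_congr rfl fun t ht => ?_
    rw [mem_Ico] at ht
    rw [if_neg (by omega)]
  rw [hrest, ← sum_Ico_consec _ (by linarith : (0:ℤ) ≤ 2*P - 2*r) (by linarith : 2*P - 2*r ≤ 2*P)]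
  have hz : ∑ t ∈ Ico (0:ℤ) (2*P - 2*r), (if 2*P - 2*r ≤ t then 2 * NP t else 0) = 0 := by
    refine Finset.sum_eq_zero fun t ht => ?_
    rw [mem_Ico] at ht
    rw [if_neg (by omega)]
  have ho : ∑ t ∈ Ico (2*P - 2*r) (2*P), (if 2*P - 2*r ≤ t then 2 * NP t else 0)
      = ∑ t ∈ Ico (2*P - 2*r) (2*P), 2 * NP t := by
    refine Finset.sum_congr rfl fun t ht => ?_
    rw [mem_Ico] at ht
    rw [if_pos ht.1]
  rw [hz, ho, ← Finset.mul_sum, altsum (by linarith), if_pos ⟨r, by ring⟩]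
  ring

lemma div_block {P : ℤ} (hP : 3 ≤ P) {num t R : ℤ} (hkey : num = (P*(4*P^2-1))*t + R)
    (h0 : 0 ≤ R) (h1 : R < P*(4*P^2-1)) : num / (P*(4*P^2-1)) = t := by
  have hpos : 0 < P*(4*P^2-1) := by nlinarith
  exact ediv_helper hpos (by linarith) (by linarith [mul_add (P*(4*P^2-1)) t 1])

lemma T_posA (P s r : ℤ) (hP : 3 ≤ P) (hs : 1 ≤ s) (hsP : s < P) (hr : 1 ≤ r) (hrP : r < P) :
    ∑ j ∈ Ico (0:ℤ) (4*P^2 - 1),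
      NP (j + (s*(4*P^2-1) + 2*P*r + 2*P^2*j) / (P*(4*P^2-1))) = 1 := by
  refine genA P r (2*s) _ hP (by linarith) (by linarith) ⟨s, by ring⟩ hr hrP ?_ ?_
  · intro t j ht0 ht2P hj1 hj2 hj0 hjM hntw
    have hq : (s*(4*P^2-1) + 2*P*r + 2*P^2*j) / (P*(4*P^2-1)) = t := by
      refine div_block hP (t := t) (R := P*t + 2*P*r - s + 2*P^2*(j - 2*P*t + 2*s)) (by ring) ?_ ?_
      · have e1 : 0 ≤ P*t := mul_nonneg (by linarith) ht0
        have e2 : 0 ≤ 2*P^2*(j - 2*P*t + 2*s) := mul_nonneg (by positivity) (by linarith)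
        nlinarith
      · rcases eq_or_lt_of_le (show j ≤ 2*P*t - 2*s + 2*P - 1 by linarith) with he | hlt
        · have htle : t ≤ 2*P - 2*r - 1 := by
            rcases not_and_or.1 hntw with h | h
            · exact absurd he h
            · omega
          have e1 : P*t ≤ P*(2*P-2*r-1) := mul_le_mul_of_nonneg_left htle (by linarith)
          nlinarith
        · have hw : j - 2*P*t + 2*s ≤ 2*P - 2 := by linarith
          have e1 : P*t ≤ P*(2*P) := mul_le_mul_of_nonneg_left ht2P (by linarith)
          have e2 : 2*P^2*(j - 2*P*t + 2*s) ≤ 2*P^2*(2*P-2) :=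
            mul_le_mul_of_nonneg_left hw (by positivity)
          have e3 : 2*P*r ≤ 2*P*(P-1) := mul_le_mul_of_nonneg_left (by linarith) (by linarith)
          nlinarith
    rw [hq]
  · intro t j ht0 ht2P hj htw hj0 hjM
    have hq : (s*(4*P^2-1) + 2*P*r + 2*P^2*j) / (P*(4*P^2-1)) = t + 1 := by
      refine div_block hP (t := t+1) (R := P*t + 2*P*r - s - 2*P^2 + P) (by rw [hj]; ring) ?_ ?_
      · have e1 : P*(2*P-2*r) ≤ P*t := mul_le_mul_of_nonneg_left htw (by linarith)
        nlinarith
      · have e1 : P*t ≤ P*(2*P) := mul_le_mul_of_nonneg_left ht2P (by linarith)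
        have e3 : 2*P*r ≤ 2*P*(P-1) := mul_le_mul_of_nonneg_left (by linarith) (by linarith)
        nlinarith
    rw [hq, ← add_assoc]

lemma T_posB (P s r : ℤ) (hP : 3 ≤ P) (hs : 1 ≤ s) (hsP : s < P) (hr : 1 ≤ r) (hrP : r < P) :
    ∑ j ∈ Ico (0:ℤ) (4*P^2 - 1),
      NP (j + (s*(4*P^2-1) - 2*P*r - 2*P^2*j) / (P*(4*P^2-1))) = 1 := by
  refine genA P r (2*P - 2*s) _ hP (by linarith) (by linarith) ⟨P - s, by ring⟩ hr hrP ?_ ?_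
  · intro t j ht0 ht2P hj1 hj2 hj0 hjM hntw
    have hq : (s*(4*P^2-1) - 2*P*r - 2*P^2*j) / (P*(4*P^2-1)) = -t := by
      refine div_block hP (t := -t)
        (R := 4*P^3 - P*t - 2*P^2*(j - 2*P*t + 2*P - 2*s) - 2*P*r - s) (by ring) ?_ ?_
      · rcases eq_or_lt_of_le (show j ≤ 2*P*t - (2*P-2*s) + 2*P - 1 by linarith) with he | hlt
        · have htle : t ≤ 2*P - 2*r - 1 := by
            rcases not_and_or.1 hntw with h | h
            · exact absurd he h
            · omega
          have e1 : P*t ≤ P*(2*P-2*r-1) := mul_le_mul_of_nonneg_left htle (by linarith)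
          have e2 : 2*P^2*(j - 2*P*t + 2*P - 2*s) = 2*P^2*(2*P-1) := by
            rw [he]; ring
          nlinarith
        · have hw : j - 2*P*t + 2*P - 2*s ≤ 2*P - 2 := by linarith
          have e1 : P*t ≤ P*(2*P) := mul_le_mul_of_nonneg_left ht2P (by linarith)
          have e2 : 2*P^2*(j - 2*P*t + 2*P - 2*s) ≤ 2*P^2*(2*P-2) :=
            mul_le_mul_of_nonneg_left hw (by positivity)
          have e3 : 2*P*r ≤ 2*P*(P-1) := mul_le_mul_of_nonneg_left (by linarith) (by linarith)
          nlinarith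
      · have e1 : 2*P*1 ≤ 2*P*r := mul_le_mul_of_nonneg_left hr (by linarith)
        have e2 : 0 ≤ P*t := mul_nonneg (by linarith) ht0
        have e3 : 0 ≤ 2*P^2*(j - 2*P*t + 2*P - 2*s) := mul_nonneg (by positivity) (by linarith)
        nlinarith
    rw [hq]
    exact NP_congr ⟨-t, by ring⟩
  · intro t j ht0 ht2P hj htw hj0 hjM
    have hq : (s*(4*P^2-1) - 2*P*r - 2*P^2*j) / (P*(4*P^2-1)) = -t - 1 := by
      refine div_block hP (t := -t-1)
        (R := 4*P^3 - P + 2*P^2 - P*t - 2*P*r - s) (by rw [hj]; ring) ?_ ?_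
      · have e1 : P*t ≤ P*(2*P) := mul_le_mul_of_nonneg_left ht2P (by linarith)
        have e3 : 2*P*r ≤ 2*P*(P-1) := mul_le_mul_of_nonneg_left (by linarith) (by linarith)
        nlinarith
      · have e1 : P*(2*P-2*r) ≤ P*t := mul_le_mul_of_nonneg_left htw (by linarith)
        nlinarith
    rw [hq]
    exact NP_congr ⟨-t - 1, by ring⟩

lemma T_zeroA (P : ℤ) (hP : 3 ≤ P) :
    ∑ j ∈ Ico (0:ℤ) (4*P^2 - 1), NP (j + (2*P^2*j) / (P*(4*P^2-1))) = -1 := by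
  have hP0 : (0:ℤ) < P := by linarith
  set M : ℤ := 4*P^2 - 1 with hM
  have hMpos : 0 < M := by nlinarith
  set b : ℤ → ℤ := fun t => min M (2*P*t) with hbdef
  set N : ℕ := (2*P).toNat with hNdef
  have hN : (N : ℤ) = 2*P := Int.toNat_of_nonneg (by linarith)
  have hb0 : b 0 = 0 := by
    simp only [hbdef]; rw [mul_zero, min_eq_right hMpos.le]
  have hbmid : ∀ t : ℤ, 0 ≤ t → t ≤ 2*P - 1 → b t = 2*P*t := by
    intro t h1 h2
    have k1 : 2*P*t ≤ 2*P*(2*P-1) := mul_le_mul_of_nonneg_left h2 (by linarith)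
    simp only [hbdef]; rw [min_eq_right (by nlinarith)]
  have hbtop : b (2*P) = M := by
    simp only [hbdef]; rw [min_eq_left (by nlinarith)]
  have hmono : ∀ t : ℤ, 0 ≤ t → t < (N:ℤ) → b t ≤ b (t + 1) := by
    intro t _ _
    refine min_le_min le_rfl ?_
    nlinarith
  have hsp := sum_parts (fun x => NP (x + (2*P^2*x) / (P*M))) b N hmono
  rw [hb0, hN, hbtop] at hsp
  rw [hsp]
  have hgoal : ∀ t ∈ Ico (0:ℤ) (2*P), (∑ x ∈ Ico (b t) (b (t+1)), NP (x + (2*P^2*x) / (P*M))) =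
      (if t = 2*P - 1 then -1 else 0) := by
    intro t ht
    rw [mem_Ico] at ht
    obtain ⟨ht0, htN⟩ := ht
    have hbt : b t = 2*P*t := hbmid t ht0 (by linarith)
    have hdiv : ∀ j, 2*P*t ≤ j → j < b (t+1) → (2*P^2*j) / (P*M) = t := by
      intro j hj1 hj2
      have hjM : j < M := lt_of_lt_of_le hj2 (by simp only [hbdef]; exact min_le_left _ _)
      rw [hM]
      refine div_block hP (t := t) (R := P*t + 2*P^2*(j - 2*P*t)) (by ring) ?_ ?_
      · have e1 : 0 ≤ P*t := mul_nonneg (by linarith) ht0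
        have e2 : 0 ≤ 2*P^2*(j - 2*P*t) := mul_nonneg (by positivity) (by linarith)
        linarith
      · rcases eq_or_lt_of_le (show j - 2*P*t ≤ 2*P - 1 by
          have : j < 2*P*(t+1) := lt_of_lt_of_le hj2 (by simp only [hbdef]; exact min_le_right _ _)
          nlinarith) with he | hlt
        · -- w = 2P - 1 forces t ≤ 2P - 2 since j < M
          have e1 : P*t ≤ P*(2*P-2) := by
            refine mul_le_mul_of_nonneg_left ?_ (by linarith)
            by_contra hcon
            push_neg at hcon
            have ht' : 2*P - 1 ≤ t := by omega
            have : 2*P*(2*P-1) ≤ 2*P*t := mul_le_mul_of_nonneg_left ht' (by linarith)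
            rw [hM] at hjM
            nlinarith
          nlinarith
        · have hw : j - 2*P*t ≤ 2*P - 2 := by linarith
          have e1 : P*t ≤ P*(2*P-1) := mul_le_mul_of_nonneg_left (by linarith) (by linarith)
          have e2 : 2*P^2*(j - 2*P*t) ≤ 2*P^2*(2*P-2) := mul_le_mul_of_nonneg_left hw (by positivity)
          nlinarith
    by_cases h2P : t = 2*P - 1
    · subst h2P
      rw [if_pos rfl, hbt, show (2*P-1) + 1 = 2*P from by ring, hbtop]
      have hsc : ∀ j ∈ Ico (2*P*(2*P-1)) M, NP (j + (2*P^2*j) / (P*M)) = NP (j + (2*P-1)) := by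
        intro j hj
        rw [mem_Ico] at hj
        rw [hdiv j hj.1 (by rw [show (2*P-1) + 1 = 2*P from by ring, hbtop]; exact hj.2)]
      rw [Finset.sum_congr rfl hsc, altsum_shift (2*P-1) (by nlinarith)]
      rw [if_neg (by
        rw [hM]; rintro ⟨m,hm⟩
        have h2 : 2*P - 1 = m + m := by nlinarith
        omega)]
      refine NP_odd ?_
      exact ⟨2*P^2 - P + P - 1, by ring⟩
    · rw [if_neg h2P]
      have ht' : t ≤ 2*P - 2 := by omega
      have hbt1 : b (t+1) = 2*P*(t+1) := hbmid (t+1) (by linarith) (by linarith)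
      have hsc : ∀ j ∈ Ico (2*P*t) (2*P*(t+1)), NP (j + (2*P^2*j) / (P*M)) = NP (j + t) := by
        intro j hj
        rw [mem_Ico] at hj
        rw [hdiv j hj.1 (by rw [hbt1]; exact hj.2)]
      rw [hbt, hbt1, Finset.sum_congr rfl hsc, altsum_shift t (by nlinarith)]
      rw [if_pos ⟨P, by ring⟩]
  refine (Finset.sum_congr rfl hgoal).trans ?_
  rw [Finset.sum_ite_eq' (Ico (0:ℤ) (2*P)) (2*P-1) (fun _ => (-1 : ℤ))]
  rw [if_pos (by rw [mem_Ico]; constructor <;> linarith)]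

lemma T_zeroB (P : ℤ) (hP : 3 ≤ P) :
    ∑ j ∈ Ico (0:ℤ) (4*P^2 - 1), NP (j + (-(2*P^2)*j) / (P*(4*P^2-1))) = 3 := by
  have hP0 : (0:ℤ) < P := by linarith
  set M : ℤ := 4*P^2 - 1 with hM
  have hMpos : 0 < M := by nlinarith
  set b : ℤ → ℤ := fun t => max 0 (min M (2*P*t - 2*P)) with hbdef
  set N : ℕ := (2*P+1).toNat with hNdef
  have hN : (N : ℤ) = 2*P + 1 := Int.toNat_of_nonneg (by linarith)
  have hb0 : b 0 = 0 := by
    simp only [hbdef]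
    rw [min_eq_right (by linarith), max_eq_left (by linarith)]
  have hb1 : b 1 = 0 := by
    simp only [hbdef]
    rw [show 2*P*1 - 2*P = (0:ℤ) from by ring, min_eq_right hMpos.le, max_eq_left le_rfl]
  have hbmid : ∀ t : ℤ, 1 ≤ t → t ≤ 2*P → b t = 2*P*t - 2*P := by
    intro t h1 h2
    have k1 : 2*P*t ≤ 2*P*(2*P) := mul_le_mul_of_nonneg_left h2 (by linarith)
    have k2 : 2*P*1 ≤ 2*P*t := mul_le_mul_of_nonneg_left h1 (by linarith)
    simp only [hbdef]
    rw [min_eq_right (by nlinarith), max_eq_right (by linarith)]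
  have hbtop : b (2*P+1) = M := by
    simp only [hbdef]
    have h1 : 2*P*(2*P+1) - 2*P = 4*P^2 := by ring
    rw [h1, min_eq_left (by nlinarith), max_eq_right hMpos.le]
  have hmono : ∀ t : ℤ, 0 ≤ t → t < (N:ℤ) → b t ≤ b (t + 1) := by
    intro t _ _
    refine max_le_max le_rfl (min_le_min le_rfl ?_)
    nlinarith
  have hsp := sum_parts (fun x => NP (x + (-(2*P^2)*x) / (P*M))) b N hmono
  rw [hb0, hN, hbtop] at hsp
  rw [hsp]
  have hgoal : ∀ t ∈ Ico (0:ℤ) (2*P+1), (∑ x ∈ Ico (b t) (b (t+1)), NP (x + (-(2*P^2)*x) / (P*M))) =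
      (if t = 1 then 2 else if t = 2*P then 1 else 0) := by
    intro t ht
    rw [mem_Ico] at ht
    obtain ⟨ht0, htN⟩ := ht
    have ht2P : t ≤ 2*P := by linarith
    rcases eq_or_lt_of_le ht0 with rfl | ht1
    · -- t = 0 : empty block
      simp only [zero_add]
      rw [hb1, hb0, Finset.Ico_self, Finset.sum_empty, if_neg (by norm_num), if_neg (by omega)]
    · have ht1 : 1 ≤ t := ht1
      have hdivmid : ∀ τ j : ℤ, 2 ≤ τ → τ ≤ 2*P → 2*P*τ - 2*P ≤ j → j < 2*P*τ → j < M →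
          (-(2*P^2)*j) / (P*M) = -τ := by
        intro τ j hτ2 hτP hj1 hj2 hjM
        rw [hM]
        refine div_block hP (t := -τ) (R := 4*P^3 - P*τ - 2*P^2*(j - 2*P*τ + 2*P)) (by ring) ?_ ?_
        · have e1 : P*τ ≤ P*(2*P) := mul_le_mul_of_nonneg_left hτP (by linarith)
          have e2 : 2*P^2*(j - 2*P*τ + 2*P) ≤ 2*P^2*(2*P-1) :=
            mul_le_mul_of_nonneg_left (by linarith) (by positivity)
          nlinarith
        · have e1 : P*2 ≤ P*τ := mul_le_mul_of_nonneg_left hτ2 (by linarith)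
          have e2 : 0 ≤ 2*P^2*(j - 2*P*τ + 2*P) := mul_nonneg (by positivity) (by linarith)
          nlinarith
      rcases eq_or_lt_of_le ht1 with rfl | ht2
      · -- t = 1 : block [0, 2P), contributes 2
        rw [if_pos rfl, show (1:ℤ)+1 = 2 from by norm_num, hb1,
          hbmid 2 (by linarith) (by linarith), show 2*P*2 - 2*P = 2*P from by ring]
        rw [← sum_Ico_consec _ (by linarith : (0:ℤ) ≤ 1) (by linarith : (1:ℤ) ≤ 2*P)]
        have hfirst : ∑ x ∈ Ico (0:ℤ) 1, NP (x + (-(2*P^2)*x) / (P*M)) = 1 := by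
          rw [show (1:ℤ) = 0 + 1 from by ring, sum_Ico_top _ le_rfl]
          simp [NP_zero]
        have hdiv1 : ∀ j : ℤ, 1 ≤ j → j < 2*P → (-(2*P^2)*j) / (P*M) = -1 := by
          intro j hj1 hj2
          rw [hM]
          refine div_block hP (t := -1) (R := 4*P^3 - P - 2*P^2*j) (by ring) ?_ ?_
          · have e2 : 2*P^2*j ≤ 2*P^2*(2*P-1) := mul_le_mul_of_nonneg_left (by linarith) (by positivity)
            nlinarith
          · have e2 : 2*P^2*1 ≤ 2*P^2*j := mul_le_mul_of_nonneg_left hj1 (by positivity)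
            nlinarith
        have hsecond : ∑ x ∈ Ico (1:ℤ) (2*P), NP (x + (-(2*P^2)*x) / (P*M)) = 1 := by
          have hc : ∀ x ∈ Ico (1:ℤ) (2*P), NP (x + (-(2*P^2)*x) / (P*M)) = NP (x + (-1)) := by
            intro x hx
            rw [mem_Ico] at hx
            rw [hdiv1 x hx.1 hx.2]
          rw [Finset.sum_congr rfl hc, altsum_shift (-1) (by linarith)]
          rw [if_neg (by rintro ⟨m, hm⟩; omega)]
          exact NP_zero
        rw [hfirst, hsecond]
        norm_num
      · -- 2 ≤ t
        have ht2 : 2 ≤ t := ht2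
        rw [if_neg (by omega)]
        have hbt : b t = 2*P*t - 2*P := hbmid t (by linarith) ht2P
        rcases eq_or_lt_of_le ht2P with rfl | htlt
        · -- t = 2P : top block
          rw [if_pos rfl, hbt, hbtop]
          
          have hc : ∀ j ∈ Ico (2*P*(2*P) - 2*P) M, NP (j + (-(2*P^2)*j) / (P*M)) = NP (j + (-(2*P))) := by
            intro j hj
            rw [mem_Ico] at hj
            have hj2 := hj.2
            rw [hM] at hj2
            rw [hdivmid (2*P) j (by linarith) le_rfl hj.1 (by nlinarith) hj.2]
          rw [Finset.sum_congr rfl hc, altsum_shift (-(2*P)) (by rw [hM]; nlinarith)]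
          rw [if_neg (by
            rw [hM]; rintro ⟨m, hm⟩
            have h2 : 2*P - 1 = m + m := by nlinarith
            omega)]
          refine NP_even ⟨2*P^2 - 2*P, by ring⟩
        · -- 2 ≤ t ≤ 2P - 1 : full block, zero
          rw [if_neg (by omega)]
          have hbt1 : b (t+1) = 2*P*(t+1) - 2*P := hbmid (t+1) (by linarith) (by linarith)
          have hk1 : 2*P*(t+1) ≤ 2*P*(2*P) := mul_le_mul_of_nonneg_left (by linarith) (by linarith)
          have hc : ∀ j ∈ Ico (2*P*t - 2*P) (2*P*(t+1) - 2*P), NP (j + (-(2*P^2)*j) / (P*M)) = NP (j + (-t)) := by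
            intro j hj
            rw [mem_Ico] at hj
            have hj2 := hj.2
            have hjM : j < M := by rw [hM]; nlinarith
            rw [hdivmid t j ht2 (by linarith) hj.1 (by linarith) hjM]
          rw [hbt, hbt1, Finset.sum_congr rfl hc, altsum_shift (-t) (by linarith)]
          rw [if_pos ⟨P, by ring⟩]
  refine (Finset.sum_congr rfl hgoal).trans ?_
  rw [← sum_Ico_consec _ (by linarith : (0:ℤ) ≤ 2) (by linarith : (2:ℤ) ≤ 2*P+1)]
  have h01 : ∑ t ∈ Ico (0:ℤ) 2, (if t = 1 then (2:ℤ) else if t = 2*P then 1 else 0) = 2 := by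
    rw [show (2:ℤ) = 1 + 1 from by ring, sum_Ico_top _ (by linarith),
      show (1:ℤ) = 0 + 1 from by ring, sum_Ico_top _ le_rfl]
    norm_num
    omega
  have h2t : ∑ t ∈ Ico (2:ℤ) (2*P+1), (if t = 1 then (2:ℤ) else if t = 2*P then 1 else 0) = 1 := by
    rw [show 2*P+1 = (2*P) + 1 from rfl, sum_Ico_top _ (by linarith)]
    have hz : ∑ t ∈ Ico (2:ℤ) (2*P), (if t = 1 then (2:ℤ) else if t = 2*P then 1 else 0) = 0 := by
      refine Finset.sum_eq_zero fun t ht => ?_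
      rw [mem_Ico] at ht
      rw [if_neg (by omega), if_neg (by omega)]
    rw [hz, if_neg (by omega), if_pos rfl]
    ring
  rw [h01, h2t]
  ring

noncomputable def SI (p q : ℤ) : ℤ := ∑ k ∈ Ico (0:ℤ) p, NP (q * k / p)

lemma sum_shift (f : ℤ → ℤ) (c d : ℤ) :
    ∑ x ∈ Ico c (c + d), f x = ∑ x ∈ Ico (0:ℤ) d, f (c + x) := by
  rw [show Ico c (c+d) = Ico (c+0) (c+d) from by rw [add_zero], ← Finset.map_add_left_Ico,
    Finset.sum_map]
  exact Finset.sum_congr rfl fun x _ => by simp [addLeftEmbedding_apply]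

lemma sum_grid_nat (f : ℤ → ℤ) (P : ℤ) (hP : 0 < P) : ∀ (n : ℕ),
    ∑ k ∈ Ico (0:ℤ) (P * n), f k = ∑ j ∈ Ico (0:ℤ) (n:ℤ), ∑ r ∈ Ico (0:ℤ) P, f (j*P + r) := by
  intro n
  induction n with
  | zero => simp
  | succ n ih =>
      have hc : ((n + 1 : ℕ) : ℤ) = (n : ℤ) + 1 := by push_cast; ring
      rw [hc, show P*((n:ℤ)+1) = P*(n:ℤ) + P from by ring,
        ← sum_Ico_consec f (show (0:ℤ) ≤ P*(n:ℤ) by positivity)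
          (show P*(n:ℤ) ≤ P*(n:ℤ) + P by linarith), ih,
        sum_Ico_top _ (by positivity : (0:ℤ) ≤ (n:ℤ)), sum_shift f (P*(n:ℤ)) P]
      congr 1
      exact Finset.sum_congr rfl fun x _ => by rw [mul_comm, add_comm]

lemma sum_grid (f : ℤ → ℤ) (P M : ℤ) (hP : 0 < P) (hM : 0 ≤ M) :
    ∑ k ∈ Ico (0:ℤ) (P * M), f k = ∑ j ∈ Ico (0:ℤ) M, ∑ r ∈ Ico (0:ℤ) P, f (j*P + r) := by
  obtain ⟨n, rfl⟩ := Int.eq_ofNat_of_zero_le hM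
  exact sum_grid_nat f P hP n

lemma SI_split (P Q : ℤ) (hP : 0 < P) :
    SI P Q = 1 + ∑ k ∈ Ico (1:ℤ) P, NP (Q * k / P) := by
  rw [SI, ← sum_Ico_consec _ (by linarith : (0:ℤ) ≤ 1) (by linarith : (1:ℤ) ≤ P)]
  congr 1
  rw [show (1:ℤ) = 0 + 1 from by ring, sum_Ico_top _ le_rfl]
  simp [NP_zero]

lemma SI_mul (P Q δ : ℤ) (hδ : δ = 1 ∨ δ = -1) (hP : 3 ≤ P) (hQodd : Odd Q)
    (hQ1 : 0 < Q) (hQP : Q < P) (hcop : IsCoprime P Q) :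
    SI (P*(4*P^2-1)) (Q*(4*P^2-1) + 2*δ*P) = SI P Q - 2*δ := by
  have hP0 : (0:ℤ) < P := by linarith
  have hM0 : (0:ℤ) < 4*P^2-1 := by nlinarith
  have hPM : (0:ℤ) < P*(4*P^2-1) := mul_pos hP0 hM0
  rw [SI, sum_grid _ P (4*P^2-1) hP0 hM0.le, Finset.sum_comm]
  have hper : ∀ r ∈ Ico (0:ℤ) P,
      (∑ j ∈ Ico (0:ℤ) (4*P^2-1), NP ((Q*(4*P^2-1) + 2*δ*P) * (j*P + r) / (P*(4*P^2-1))))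
      = (if r = 0 then 1 - 2*δ else NP (Q*r / P)) := by
    intro r hr
    rw [mem_Ico] at hr
    have hqr : P * (Q*r / P) + Q*r % P = Q*r := Int.mul_ediv_add_emod (Q*r) P
    have hs0 : 0 ≤ Q*r % P := Int.emod_nonneg _ (ne_of_gt hP0)
    have hsP : Q*r % P < P := Int.emod_lt_of_pos _ hP0
    have hsplit : ∀ j : ℤ, NP ((Q*(4*P^2-1) + 2*δ*P) * (j*P + r) / (P*(4*P^2-1)))
        = NP (j + ((Q*r % P)*(4*P^2-1) + 2*δ*P*r + 2*δ*P^2*j) / (P*(4*P^2-1))) * NP (Q*r / P) := by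
      intro j
      have hkey : (Q*(4*P^2-1) + 2*δ*P) * (j*P + r)
          = ((Q*r % P)*(4*P^2-1) + 2*δ*P*r + 2*δ*P^2*j) + (P*(4*P^2-1))*(Q*j + Q*r / P) := by
        linear_combination (4*P^2-1) * hqr.symm
      rw [hkey, Int.add_mul_ediv_left _ _ (ne_of_gt hPM), ← add_assoc, NP_add]
      congr 1
      refine NP_congr ?_
      obtain ⟨m, hm⟩ := hQodd
      exact ⟨m*j, by rw [hm]; ring⟩
    rw [Finset.sum_congr rfl (fun j _ => hsplit j), ← Finset.sum_mul]
    by_cases hr0 : r = 0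
    · subst hr0
      have hs : Q*(0:ℤ) % P = 0 := by simp
      have hu : Q*(0:ℤ) / P = 0 := by simp
      simp only [hs, hu, NP_zero, mul_one, if_pos]
      rcases hδ with rfl | rfl
      · have he : ∀ j : ℤ, (0*(4*P^2-1) + 2*1*P*0 + 2*1*P^2*j) = 2*P^2*j := fun j => by ring
        simp only [he]
        rw [T_zeroA P hP]; norm_num
      · have he : ∀ j : ℤ, (0*(4*P^2-1) + 2*(-1)*P*0 + 2*(-1)*P^2*j) = -(2*P^2)*j := fun j => by ring
        simp only [he]
        rw [T_zeroB P hP]; norm_num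
    · have hr1 : 1 ≤ r := by omega
      have hs1 : 1 ≤ Q*r % P := by
        rcases eq_or_lt_of_le hs0 with h | h
        · exfalso
          have hdvd : P ∣ Q*r := Int.dvd_of_emod_eq_zero h.symm
          have : P ∣ r := hcop.dvd_of_dvd_mul_left hdvd
          have := Int.le_of_dvd (by omega) this
          omega
        · exact h
      rw [if_neg hr0]
      rcases hδ with rfl | rfl
      · have he : ∀ j : ℤ, ((Q*r % P)*(4*P^2-1) + 2*1*P*r + 2*1*P^2*j)
            = ((Q*r % P)*(4*P^2-1) + 2*P*r + 2*P^2*j) := fun j => by ring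
        simp only [he]
        rw [T_posA P (Q*r % P) r hP hs1 hsP hr1 hr.2, one_mul]
      · have he : ∀ j : ℤ, ((Q*r % P)*(4*P^2-1) + 2*(-1)*P*r + 2*(-1)*P^2*j)
            = ((Q*r % P)*(4*P^2-1) - 2*P*r - 2*P^2*j) := fun j => by ring
        simp only [he]
        rw [T_posB P (Q*r % P) r hP hs1 hsP hr1 hr.2, one_mul]
  refine (Finset.sum_congr rfl hper).trans ?_
  rw [← sum_Ico_consec _ (by linarith : (0:ℤ) ≤ 1) (by linarith : (1:ℤ) ≤ P)]
  have h0 : ∑ r ∈ Ico (0:ℤ) 1, (if r = 0 then 1 - 2*δ else NP (Q*r / P)) = 1 - 2*δ := by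
    rw [show (1:ℤ) = 0 + 1 from by ring, sum_Ico_top _ le_rfl]
    simp
  have h1 : ∑ r ∈ Ico (1:ℤ) P, (if r = 0 then 1 - 2*δ else NP (Q*r / P))
      = ∑ r ∈ Ico (1:ℤ) P, NP (Q*r / P) := by
    refine Finset.sum_congr rfl fun r hr => ?_
    rw [mem_Ico] at hr
    rw [if_neg (by omega)]
  rw [h0, h1, SI_split P Q hP0]
  ring

lemma diagElem_eq_s11 (p q : ℤ) (hp : 0 < p) : diagElem p q = 1 - SI p q := by
  have h1 : Finset.Icc (1:ℤ) (p-1) = Finset.Ico 1 p := by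
    ext x; simp only [mem_Icc, mem_Ico]; omega
  have h2 : ∀ k : ℤ, ((⌊(q : ℚ) * (k : ℚ) / (p : ℚ)⌋).negOnePow : ℤ) = NP (q * k / p) := by
    intro k
    have : (q : ℚ) * (k : ℚ) = ((q * k : ℤ) : ℚ) := by push_cast; ring
    rw [NP, this, floor_eq_ediv_s11 (q*k) p hp]
  rw [diagElem, h1, Finset.sum_congr rfl (fun k _ => h2 k), SI_split p q hp]
  ring

lemma SI_base : SI 3 1 = 3 := by
  rw [SI, show (3:ℤ) = 2 + 1 from by norm_num, sum_Ico_top _ (by norm_num),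
    show (2:ℤ) = 1 + 1 from by norm_num, sum_Ico_top _ (by norm_num),
    show (1:ℤ) = 0 + 1 from by norm_num, sum_Ico_top _ le_rfl]
  norm_num [NP_zero]

lemma step_all (P Q δ : ℤ) (hδ1 : δ = 1 ∨ δ = -1) (h3 : 3 ≤ P) (hPodd : Odd P)
    (hQodd : Odd Q) (hQ1 : 0 < Q) (hQP : Q < P) (hcop : IsCoprime P Q) :
    (3 ≤ P*(4*P^2-1) ∧ Odd (P*(4*P^2-1)) ∧ Odd (Q*(4*P^2-1) + 2*δ*P) ∧
      0 < Q*(4*P^2-1) + 2*δ*P ∧ Q*(4*P^2-1) + 2*δ*P < P*(4*P^2-1) ∧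
      IsCoprime (P*(4*P^2-1)) (Q*(4*P^2-1) + 2*δ*P)) ∧
    SI (P*(4*P^2-1)) (Q*(4*P^2-1) + 2*δ*P) = SI P Q - 2*δ := by
  have hP0 : (0:ℤ) < P := by linarith
  have hM0 : (0:ℤ) < 4*P^2-1 := by nlinarith
  have hModd : Odd (4*P^2-1) := ⟨2*P^2-1, by ring⟩
  have hPQ2 : Q + 2 ≤ P := by
    obtain ⟨a, ha⟩ := hPodd
    obtain ⟨b, hb⟩ := hQodd
    omega
  have habs : 2*δ*P ≤ 2*P ∧ -(2*P) ≤ 2*δ*P := by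
    rcases hδ1 with rfl | rfl <;> constructor <;> linarith
  have hQM : 1*(4*P^2-1) ≤ Q*(4*P^2-1) := mul_le_mul_of_nonneg_right hQ1 hM0.le
  refine ⟨⟨by nlinarith, hPodd.mul hModd,
    (hQodd.mul hModd).add_even ⟨δ*P, by ring⟩, by nlinarith [habs.1, habs.2], ?_, ?_⟩,
    SI_mul P Q δ hδ1 h3 hQodd hQ1 hQP hcop⟩
  · have : (Q+2)*(4*P^2-1) ≤ P*(4*P^2-1) := mul_le_mul_of_nonneg_right hPQ2 hM0.le
    nlinarith [habs.1, habs.2]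
  · have copPM : IsCoprime P (4*P^2-1) := ⟨4*P, -1, by ring⟩
    have copM2 : IsCoprime (4*P^2-1) 2 := ⟨-1, 2*P^2, by ring⟩
    have copMδ : IsCoprime (4*P^2-1) δ := by
      rcases hδ1 with rfl | rfl
      · exact isCoprime_one_right
      · exact isCoprime_one_right.neg_right
    have copMq' : IsCoprime (4*P^2-1) (Q*(4*P^2-1) + 2*δ*P) := by
      have h1 : IsCoprime (4*P^2-1) (2*δ*P) :=
        (copM2.mul_right copMδ).mul_right copPM.symm
      have h2 := h1.add_mul_left_right Q
      rw [show 2*δ*P + (4*P^2-1)*Q = Q*(4*P^2-1) + 2*δ*P from by ring] at h2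
      exact h2
    have copPq' : IsCoprime P (Q*(4*P^2-1) + 2*δ*P) := by
      have h1 : IsCoprime P (Q*(4*P^2-1)) := hcop.mul_right copPM
      have h2 := h1.add_mul_left_right (2*δ)
      rw [show Q*(4*P^2-1) + P*(2*δ) = Q*(4*P^2-1) + 2*δ*P from by ring] at h2
      exact h2
    exact copPq'.mul_left copMq'

lemma main_ind (ε : ℕ → ℕ) (hε : ∀ j, ε j = 0 ∨ ε j = 1) : ∀ n : ℕ,
    (3 ≤ pSeq n ∧ Odd (pSeq n) ∧ Odd (-(q'Seq ε n)) ∧ 0 < -(q'Seq ε n) ∧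
      -(q'Seq ε n) < pSeq n ∧ IsCoprime (pSeq n) (-(q'Seq ε n)))
    ∧ SI (pSeq n) (-(q'Seq ε n)) =
        3 - 2*(((Finset.range n).filter (fun j => ε j = 0)).card : ℤ)
          + 2*(((Finset.range n).filter (fun j => ε j = 1)).card : ℤ) := by
  intro n
  induction n with
  | zero =>
      constructor
      · refine ⟨by norm_num [pSeq], ⟨1, by norm_num [pSeq]⟩, ⟨0, by norm_num [q'Seq]⟩,
          by norm_num [q'Seq], by norm_num [pSeq, q'Seq], ?_⟩
        rw [show -(q'Seq ε 0) = 1 from by norm_num [q'Seq]]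
        exact isCoprime_one_right
      · rw [show pSeq 0 = 3 from rfl, show -(q'Seq ε 0) = 1 from by norm_num [q'Seq]]
        simp [SI_base]
  | succ n ih =>
      obtain ⟨⟨h3, hPodd, hQodd, hQ1, hQP, hcop⟩, hSI⟩ := ih
      have hp' : pSeq (n+1) = (pSeq n)*(4*(pSeq n)^2-1) := by
        show pSeq n * (4 * (pSeq n) ^ 2 - 1) = _
        ring
      have hcard0 : (((Finset.range (n+1)).filter (fun j => ε j = 0)).card : ℤ)
          = (((Finset.range n).filter (fun j => ε j = 0)).card : ℤ)
            + (if ε n = 0 then 1 else 0) := by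
        rw [Finset.range_add_one, Finset.filter_insert]
        by_cases h : ε n = 0 <;> simp [h, Finset.mem_filter]
      have hcard1 : (((Finset.range (n+1)).filter (fun j => ε j = 1)).card : ℤ)
          = (((Finset.range n).filter (fun j => ε j = 1)).card : ℤ)
            + (if ε n = 1 then 1 else 0) := by
        rw [Finset.range_add_one, Finset.filter_insert]
        by_cases h : ε n = 1 <;> simp [h, Finset.mem_filter]
      rcases hε n with hen | hen
      · have hq' : -(q'Seq ε (n+1)) = (-(q'Seq ε n))*(4*(pSeq n)^2-1) + 2*1*(pSeq n) := by
          show -(q'Seq ε n * (4 * (pSeq n) ^ 2 - 1) + 2 * (-1 : ℤ) ^ (ε n + 1) * pSeq n) = _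
          rw [hen]
          ring
        have hstep := step_all (pSeq n) (-(q'Seq ε n)) 1 (Or.inl rfl) h3 hPodd hQodd hQ1 hQP hcop
        constructor
        · rw [hp', hq']; exact hstep.1
        · rw [hp', hq', hstep.2, hSI, hcard0, hcard1, hen]
          norm_num
          ring
      · have hq' : -(q'Seq ε (n+1)) = (-(q'Seq ε n))*(4*(pSeq n)^2-1) + 2*(-1)*(pSeq n) := by
          show -(q'Seq ε n * (4 * (pSeq n) ^ 2 - 1) + 2 * (-1 : ℤ) ^ (ε n + 1) * pSeq n) = _
          rw [hen]
          ring
        have hstep := step_all (pSeq n) (-(q'Seq ε n)) (-1) (Or.inr rfl) h3 hPodd hQodd hQ1 hQP hcop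
        constructor
        · rw [hp', hq']; exact hstep.1
        · rw [hp', hq', hstep.2, hSI, hcard0, hcard1, hen]
          norm_num
          ring


/-- For every `n ≥ 0` and every sequence `ε : ℕ → {0,1}`,
`d(p(n), −q'_ε(n)) = −2 + 2·#{j < n : ε(j)=0} − 2·#{j < n : ε(j)=1}`; in particular
`d(p(n), −q'_ε(n)) = 2n − 2 − 4·#{j < n : ε(j)=1}`, so the set of values of
`d(p(n), −q'_ε(n))` over all `ε` is `{2n − 2 − 4j : j = 0, 1, …, n}`. -/
theorem diagElem_closed_form (n : ℕ) :
    (∀ ε : ℕ → ℕ, (∀ j, ε j = 0 ∨ ε j = 1) →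
      diagElem (pSeq n) (-(q'Seq ε n)) =
        -2 + 2 * (((Finset.range n).filter (fun j => ε j = 0)).card : ℤ)
          - 2 * (((Finset.range n).filter (fun j => ε j = 1)).card : ℤ) ∧
      diagElem (pSeq n) (-(q'Seq ε n)) =
        2 * (n : ℤ) - 2 - 4 * (((Finset.range n).filter (fun j => ε j = 1)).card : ℤ)) ∧
    {x : ℤ | ∃ ε : ℕ → ℕ, (∀ j, ε j = 0 ∨ ε j = 1) ∧
        x = diagElem (pSeq n) (-(q'Seq ε n))} =
      {x : ℤ | ∃ j : ℕ, j ≤ n ∧ x = 2 * (n : ℤ) - 2 - 4 * (j : ℤ)} := by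
  have part1 : ∀ ε : ℕ → ℕ, (∀ j, ε j = 0 ∨ ε j = 1) →
      diagElem (pSeq n) (-(q'Seq ε n)) =
        -2 + 2 * (((Finset.range n).filter (fun j => ε j = 0)).card : ℤ)
          - 2 * (((Finset.range n).filter (fun j => ε j = 1)).card : ℤ) ∧
      diagElem (pSeq n) (-(q'Seq ε n)) =
        2 * (n : ℤ) - 2 - 4 * (((Finset.range n).filter (fun j => ε j = 1)).card : ℤ) := by
    intro ε hε
    obtain ⟨⟨h3, -, -, -, -, -⟩, hSI⟩ := main_ind ε hε n
    have hd := diagElem_eq_s11 (pSeq n) (-(q'Seq ε n)) (by linarith)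
    have hsum : (((Finset.range n).filter (fun j => ε j = 0)).card : ℤ)
        + (((Finset.range n).filter (fun j => ε j = 1)).card : ℤ) = n := by
      have h := Finset.card_filter_add_card_filter_not
        (s := Finset.range n) (p := fun j => ε j = 0)
      have h2 : (Finset.range n).filter (fun j => ¬ ε j = 0)
          = (Finset.range n).filter (fun j => ε j = 1) := by
        refine Finset.filter_congr fun j _ => ?_
        rcases hε j with h | h <;> simp [h]
      rw [h2, Finset.card_range] at h
      exact_mod_cast h
    constructor
    · rw [hd, hSI]; ring
    · rw [hd, hSI]; push_cast at hsum ⊢; linarith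
  refine ⟨part1, ?_⟩
  ext x
  simp only [Set.mem_setOf_eq]
  constructor
  · rintro ⟨ε, hε, hx⟩
    refine ⟨((Finset.range n).filter (fun j => ε j = 1)).card, ?_, ?_⟩
    · exact (Finset.card_filter_le _ _).trans (by rw [Finset.card_range])
    · rw [hx, (part1 ε hε).2]
  · rintro ⟨j, hj, hx⟩
    have hεv : ∀ i : ℕ, (if i < j then (1:ℕ) else 0) = 0 ∨ (if i < j then (1:ℕ) else 0) = 1 := by
      intro i
      by_cases h : i < j <;> simp [h]
    refine ⟨fun i => if i < j then 1 else 0, hεv, ?_⟩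
    have hf : ((Finset.range n).filter (fun i => (if i < j then (1:ℕ) else 0) = 1))
        = Finset.range j := by
      ext i
      simp only [Finset.mem_filter, Finset.mem_range]
      by_cases h : i < j
      · simp only [if_pos h]
        constructor
        · intro _
          exact h
        · intro _
          exact ⟨by omega, trivial⟩
      · simp only [if_neg h]
        constructor
        · rintro ⟨-, hc⟩
          omega
        · intro hc
          omega
    rw [(part1 _ hεv).2, hf, Finset.card_range, hx]
end

section
/- Let p ≥ 1 be an integer and q ≥ 1 an odd integer. Then ∑_{k=0}^{2p−1} (−1)^{⌊q·k/p⌋} = 0. -/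
/-- Let `p ≥ 1` be an integer and `q ≥ 1` an odd integer. Then
`∑_{k=0}^{2p−1} (−1)^{⌊q·k/p⌋} = 0`. -/
theorem sum_negOnePow_two_period (p q : ℤ) (hp : 1 ≤ p) (hq : 1 ≤ q) (hqodd : Odd q) :
    ∑ k ∈ Finset.Icc (0 : ℤ) (2 * p - 1),
      ((⌊(q : ℚ) * (k : ℚ) / (p : ℚ)⌋).negOnePow : ℤ) = 0 := by
  have hp0 : (p : ℚ) ≠ 0 := by exact_mod_cast (by omega : p ≠ 0)
  have key : ∀ k : ℤ, ((⌊(q : ℚ) * ((k + p) : ℤ) / (p : ℚ)⌋).negOnePow : ℤ)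
      = -((⌊(q : ℚ) * (k : ℚ) / (p : ℚ)⌋).negOnePow : ℤ) := by
    intro k
    have : (q : ℚ) * ((k + p : ℤ) : ℚ) / (p : ℚ) = (q : ℚ) * (k : ℚ) / (p : ℚ) + (q : ℤ) := by
      push_cast
      field_simp
    rw [this, Int.floor_add_intCast, Int.negOnePow_add, Int.negOnePow_odd _ hqodd]
    push_cast
    ring
  have hIcc : Finset.Icc (0 : ℤ) (2 * p - 1) = Finset.Ico (0 : ℤ) (2 * p) := by
    ext x; simp [Finset.mem_Icc, Finset.mem_Ico]
  rw [hIcc, ← Finset.Ico_union_Ico_eq_Ico (by omega : (0:ℤ) ≤ p) (by omega : p ≤ 2 * p),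
    Finset.sum_union (Finset.Ico_disjoint_Ico_consecutive 0 p (2 * p))]
  have : ∑ k ∈ Finset.Ico p (2 * p), ((⌊(q : ℚ) * (k : ℚ) / (p : ℚ)⌋).negOnePow : ℤ)
      = ∑ k ∈ Finset.Ico (0 : ℤ) p, -((⌊(q : ℚ) * (k : ℚ) / (p : ℚ)⌋).negOnePow : ℤ) := by
    have hmap := Finset.sum_map (Finset.Ico (0:ℤ) p) (addRightEmbedding p)
        (fun k => ((⌊(q : ℚ) * (k : ℚ) / (p : ℚ)⌋).negOnePow : ℤ))
    rw [Finset.map_add_right_Ico, zero_add, ← two_mul] at hmap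
    rw [hmap]
    apply Finset.sum_congr rfl
    intro x _
    simpa using key x
  rw [this]
  simp
end

section
/- Let p ≥ 2 and q ≥ 1 be integers, set P = 4p³ − p and Q = (4p² − 1)q + 2p, and let k be an integer with 0 < k < P. Write m = ⌊k/(4p² − 1)⌋ and u = k − m(4p² − 1). Then ⌊Q·k/P⌋ = ⌊q·k/p⌋ + 2m + ⌊{q·k/p} + 2u/(4p² − 1)⌋, where {x} = x − ⌊x⌋ denotes the fractional part. Consequently (−1)^{⌊Q·k/P⌋} ≠ (−1)^{⌊q·k/p⌋} if and only if 1 ≤ {q·k/p} + 2u/(4p² − 1) < 2. -/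
/-- Let `p ≥ 2` and `q ≥ 1` be integers, set `P = 4p³ − p` and `Q = (4p² − 1)q + 2p`, and let
`k` be an integer with `0 < k < P`. Write `m = ⌊k/(4p² − 1)⌋` and `u = k − m(4p² − 1)`. Then
`⌊Q·k/P⌋ = ⌊q·k/p⌋ + 2m + ⌊{q·k/p} + 2u/(4p² − 1)⌋`, where `{x}` denotes the fractional
part. Consequently `(−1)^{⌊Q·k/P⌋} ≠ (−1)^{⌊q·k/p⌋}` if and only if
`1 ≤ {q·k/p} + 2u/(4p² − 1) < 2`. -/
theorem floor_decomposition (p q k P Q m u : ℤ) (hp : 2 ≤ p) (hq : 1 ≤ q)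
    (hP : P = 4 * p ^ 3 - p) (hQ : Q = (4 * p ^ 2 - 1) * q + 2 * p)
    (hk0 : 0 < k) (hkP : k < P)
    (hm : m = ⌊(k : ℚ) / ((4 : ℚ) * (p : ℚ) ^ 2 - 1)⌋)
    (hu : u = k - m * (4 * p ^ 2 - 1)) :
    ⌊(Q : ℚ) * (k : ℚ) / (P : ℚ)⌋ =
      ⌊(q : ℚ) * (k : ℚ) / (p : ℚ)⌋ + 2 * m +
        ⌊Int.fract ((q : ℚ) * (k : ℚ) / (p : ℚ)) +
          2 * (u : ℚ) / ((4 : ℚ) * (p : ℚ) ^ 2 - 1)⌋ ∧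
    (((⌊(Q : ℚ) * (k : ℚ) / (P : ℚ)⌋).negOnePow : ℤ) ≠
        ((⌊(q : ℚ) * (k : ℚ) / (p : ℚ)⌋).negOnePow : ℤ) ↔
      1 ≤ Int.fract ((q : ℚ) * (k : ℚ) / (p : ℚ)) +
            2 * (u : ℚ) / ((4 : ℚ) * (p : ℚ) ^ 2 - 1) ∧
        Int.fract ((q : ℚ) * (k : ℚ) / (p : ℚ)) +
            2 * (u : ℚ) / ((4 : ℚ) * (p : ℚ) ^ 2 - 1) < 2) := by
  have hpQ : (2 : ℚ) ≤ (p : ℚ) := by exact_mod_cast hp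
  have hp0 : (0 : ℚ) < (p : ℚ) := by linarith
  set D : ℚ := (4 : ℚ) * (p : ℚ) ^ 2 - 1 with hD
  have hD0 : (0 : ℚ) < D := by nlinarith
  have hPQ : (P : ℚ) = (p : ℚ) * D := by rw [hP]; push_cast; ring
  have hkD : (k : ℚ) = m * D + u := by
    have : (u : ℚ) = k - m * D := by rw [hu]; push_cast [hD]; ring
    linarith
  have hDne : D ≠ 0 := ne_of_gt hD0
  have hpne : (p : ℚ) ≠ 0 := ne_of_gt hp0
  set F : ℚ := Int.fract ((q : ℚ) * k / p) + 2 * (u : ℚ) / D with hFdef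
  have e1 : (Q : ℚ) * k / P = (q : ℚ) * k / p + 2 * k / D := by
    rw [hQ, hPQ, hD]
    push_cast
    rw [hD] at hDne
    field_simp
  have e2 : 2 * (k : ℚ) / D = 2 * m + 2 * u / D := by
    rw [hkD]
    field_simp
  have hsplit : (Q : ℚ) * k / P =
      ((⌊(q : ℚ) * k / p⌋ + 2 * m : ℤ) : ℚ) + F := by
    rw [e1, e2, hFdef, Int.fract]
    push_cast
    ring
  have h1 : ⌊(Q : ℚ) * k / P⌋ = ⌊(q : ℚ) * k / p⌋ + 2 * m + ⌊F⌋ := by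
    rw [hsplit, add_comm ((_ : ℤ) : ℚ) F, Int.floor_add_intCast]
    ring
  -- bounds on u
  have hmu1 : (m : ℚ) ≤ (k : ℚ) / D := by rw [hm]; exact Int.floor_le _
  have hmu2 : (k : ℚ) / D < m + 1 := by rw [hm]; exact Int.lt_floor_add_one _
  have hu0 : (0 : ℚ) ≤ (u : ℚ) := by
    have := (le_div_iff₀ hD0).mp hmu1
    linarith [hkD]
  have huD : (u : ℚ) < D := by
    have := (div_lt_iff₀ hD0).mp hmu2
    nlinarith [hkD]
  have hF0 : (0 : ℚ) ≤ F := by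
    have := Int.fract_nonneg ((q : ℚ) * k / p)
    have : (0 : ℚ) ≤ 2 * (u : ℚ) / D := by positivity
    have := Int.fract_nonneg ((q : ℚ) * k / p)
    rw [hFdef]; linarith
  have hF3 : F < 3 := by
    have h1' := Int.fract_lt_one ((q : ℚ) * k / p)
    have h2' : 2 * (u : ℚ) / D < 2 := by
      rw [div_lt_iff₀ hD0]; linarith
    rw [hFdef]; linarith
  have hfl0 : 0 ≤ ⌊F⌋ := Int.floor_nonneg.mpr hF0
  have hfl2 : ⌊F⌋ ≤ 2 := by
    have : ⌊F⌋ < 3 := by exact_mod_cast Int.floor_lt.mpr (by exact_mod_cast hF3)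
    omega
  refine ⟨h1, ?_⟩
  have hneg : (⌊(Q : ℚ) * k / P⌋).negOnePow =
      (⌊(q : ℚ) * k / p⌋).negOnePow * (⌊F⌋).negOnePow := by
    rw [h1]
    rw [show ⌊(q : ℚ) * k / p⌋ + 2 * m + ⌊F⌋ = ⌊(q : ℚ) * k / p⌋ + (2 * m + ⌊F⌋) by ring]
    rw [Int.negOnePow_add, Int.negOnePow_add, Int.negOnePow_two_mul, one_mul]
  have ha0 : (((⌊(q : ℚ) * k / p⌋).negOnePow : ℤˣ) : ℤ) ≠ 0 := Units.ne_zero _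
  have hiff : ⌊F⌋ = 1 ↔ (1 ≤ F ∧ F < 2) := by
    rw [Int.floor_eq_iff]
    norm_num
  rw [hneg, Units.val_mul, ne_eq, mul_right_eq_self₀, not_or]
  simp only [ha0, not_false_iff, and_true, Units.val_eq_one, Int.negOnePow_eq_one_iff]
  constructor
  · intro h
    have h2 := Int.not_even_iff.mp h
    exact hiff.mp (by omega)
  · intro h
    have h2 : ⌊F⌋ = 1 := hiff.mpr h
    rw [h2]
    decide
end
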